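/- arXiv:1809.01223 — 5 statements merged into one kernel-verified Lean document; each statement's English description precedes it below -/
import Mathlib

section
/- Any finite collection of mutually independent real-valued random variables is associated: for any two coordinatewise non-decreasing functions h, g : ℝⁿ → ℝ with h(X₁,…,Xₙ) and g(X₁,…,Xₙ) square-integrable, Cov(h(X₁,…,Xₙ), g(X₁,…,Xₙ)) ≥ 0. -/
open MeasureTheory ProbabilityTheory Filter

lemma my_int_bdd {α : Type*} [MeasurableSpace α] (μ : Measure α) [IsFiniteMeasure μ]
    {f : α → ℝ} (hf : Measurable f) {C : ℝ} (hC : ∀ x, |f x| ≤ C) : Integrable f μ :=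
  ⟨hf.aestronglyMeasurable, HasFiniteIntegral.of_bounded
    (Filter.Eventually.of_forall fun x => by simpa using hC x)⟩

lemma my_abs_integral_le {α : Type*} [MeasurableSpace α] (μ : Measure α)
    [IsProbabilityMeasure μ] {f : α → ℝ} (hf : Integrable f μ) {C : ℝ}
    (hC : ∀ x, |f x| ≤ C) : |∫ x, f x ∂μ| ≤ C := by
  calc |∫ x, f x ∂μ| ≤ ∫ x, |f x| ∂μ := by
        simpa [Real.norm_eq_abs] using norm_integral_le_integral_norm (μ := μ) f
  _ ≤ ∫ _x, C ∂μ := integral_mono hf.abs (integrable_const C) fun x => hC x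
  _ = C := by simp

lemma my_chebyshev (μ : Measure ℝ) [IsProbabilityMeasure μ] {f g : ℝ → ℝ}
    (hf : Monotone f) (hg : Monotone g) (hfm : Measurable f) (hgm : Measurable g)
    {C : ℝ} (hfC : ∀ x, |f x| ≤ C) (hgC : ∀ x, |g x| ≤ C) :
    (∫ x, f x ∂μ) * (∫ x, g x ∂μ) ≤ ∫ x, f x * g x ∂μ := by
  have hC0 : 0 ≤ C := le_trans (abs_nonneg _) (hfC 0)
  have If : Integrable f μ := my_int_bdd μ hfm hfC
  have Ig : Integrable g μ := my_int_bdd μ hgm hgC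
  have Ifg : Integrable (fun x => f x * g x) μ := by
    refine my_int_bdd μ (hfm.mul hgm) (C := C * C) fun x => ?_
    rw [abs_mul]
    exact mul_le_mul (hfC x) (hgC x) (abs_nonneg _) hC0
  have inner : ∀ x, ∫ y, (f x - f y) * (g x - g y) ∂μ
      = f x * g x - f x * (∫ y, g y ∂μ) - g x * (∫ y, f y ∂μ) + ∫ y, f y * g y ∂μ := by
    intro x
    have e : ∀ y, (f x - f y) * (g x - g y)
        = f x * g x - f x * g y - g x * f y + f y * g y := fun y => by ring
    simp_rw [e]
    have i1 : Integrable (fun y => f x * g y) μ := Ig.const_mul _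
    have i2 : Integrable (fun y => g x * f y) μ := If.const_mul _
    have i3 : Integrable (fun y => f x * g x - f x * g y) μ := (integrable_const _).sub i1
    have i4 : Integrable (fun y => f x * g x - f x * g y - g x * f y) μ := i3.sub i2
    rw [integral_add i4 Ifg, integral_sub i3 i2, integral_sub (integrable_const _) i1,
      integral_const, integral_const_mul, integral_const_mul]
    simp
  have key : 0 ≤ ∫ x, ∫ y, (f x - f y) * (g x - g y) ∂μ ∂μ := by
    refine integral_nonneg fun x => integral_nonneg fun y => ?_
    rcases le_total x y with hxy | hxy
    · have h1 : f x - f y ≤ 0 := by simp [hf hxy]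
      have h2 : g x - g y ≤ 0 := by simp [hg hxy]
      exact mul_nonneg_of_nonpos_of_nonpos h1 h2
    · exact mul_nonneg (by simp [hf hxy]) (by simp [hg hxy])
  rw [show (fun x => ∫ y, (f x - f y) * (g x - g y) ∂μ)
      = fun x => f x * g x - f x * (∫ y, g y ∂μ) - g x * (∫ y, f y ∂μ) + ∫ y, f y * g y ∂μ
      from funext inner] at key
  have j1 : Integrable (fun x => f x * (∫ y, g y ∂μ)) μ := If.mul_const _
  have j2 : Integrable (fun x => g x * (∫ y, f y ∂μ)) μ := Ig.mul_const _
  have j3 : Integrable (fun x => f x * g x - f x * (∫ y, g y ∂μ)) μ := Ifg.sub j1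
  have j4 : Integrable
      (fun x => f x * g x - f x * (∫ y, g y ∂μ) - g x * (∫ y, f y ∂μ)) μ := j3.sub j2
  rw [integral_add j4 (integrable_const _), integral_sub j3 j2, integral_sub Ifg j1,
    integral_const, integral_mul_const, integral_mul_const] at key
  simp only [measure_univ, probReal_univ, ENNReal.toReal_one, smul_eq_mul, one_mul] at key
  nlinarith [key]

lemma my_fkg_pi : ∀ (n : ℕ) (μ : Fin n → Measure ℝ),
    (∀ i, IsProbabilityMeasure (μ i)) →
    ∀ (h g : (Fin n → ℝ) → ℝ), Monotone h → Monotone g →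
    Measurable h → Measurable g → ∀ (C : ℝ),
    (∀ x, |h x| ≤ C) → (∀ x, |g x| ≤ C) →
    (∫ x, h x ∂Measure.pi μ) * (∫ x, g x ∂Measure.pi μ) ≤ ∫ x, h x * g x ∂Measure.pi μ := by
  intro n
  induction n with
  | zero =>
    intro μ hprob h g _ _ _ _ C _ _
    haveI := hprob
    haveI : IsProbabilityMeasure (Measure.pi μ) := by infer_instance
    have e : ∀ (f : (Fin 0 → ℝ) → ℝ), ∫ x, f x ∂Measure.pi μ = f default := by
      intro f
      rw [show f = fun _ => f default from funext fun x => by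
        rw [Subsingleton.elim x default]]
      simp
    rw [e h, e g, e (fun x => h x * g x)]
  | succ n ih =>
    intro μ hprob h g hh hg hhm hgm C hhC hgC
    haveI := hprob
    haveI : IsProbabilityMeasure (Measure.pi fun j => μ (Fin.succAbove 0 j)) := by
      infer_instance
    haveI : IsProbabilityMeasure
        ((μ 0).prod (Measure.pi fun j => μ (Fin.succAbove 0 j))) := by infer_instance
    have hC0 : 0 ≤ C := le_trans (abs_nonneg _) (hhC 0)
    set e := MeasurableEquiv.piFinSuccAbove (fun _ : Fin (n+1) => ℝ) 0 with he
    have mp := measurePreserving_piFinSuccAbove (fun i => μ i) 0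
    have hsymm_mono : Monotone (fun p : ℝ × (Fin n → ℝ) => (e.symm p : Fin (n+1) → ℝ)) := by
      intro p q hpq j
      show e.symm p j ≤ e.symm q j
      have hj : ∀ r : ℝ × (Fin n → ℝ), (e.symm r : Fin (n+1) → ℝ) = Fin.insertNth 0 r.1 r.2 :=
        fun r => rfl
      rw [hj p, hj q]
      induction j using Fin.cases with
      | zero => simpa [Fin.insertNth_zero] using hpq.1
      | succ k => simpa [Fin.insertNth_zero] using hpq.2 k
    have hh'mono : Monotone (fun p : ℝ × (Fin n → ℝ) => h (e.symm p)) :=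
      fun p q hpq => hh (hsymm_mono hpq)
    have hg'mono : Monotone (fun p : ℝ × (Fin n → ℝ) => g (e.symm p)) :=
      fun p q hpq => hg (hsymm_mono hpq)
    have hh'meas : Measurable (fun p : ℝ × (Fin n → ℝ) => h (e.symm p)) :=
      hhm.comp e.symm.measurable
    have hg'meas : Measurable (fun p : ℝ × (Fin n → ℝ) => g (e.symm p)) :=
      hgm.comp e.symm.measurable
    have transfer : ∀ (f : (Fin (n+1) → ℝ) → ℝ),
        ∫ x, f x ∂Measure.pi μ
          = ∫ p, f (e.symm p) ∂((μ 0).prod (Measure.pi fun j => μ (Fin.succAbove 0 j))) := by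
      intro f
      have h1 := mp.integral_comp e.measurableEmbedding (fun p => f (e.symm p))
      refine Eq.trans ?_ h1
      refine integral_congr_ae (Filter.Eventually.of_forall fun x => ?_)
      show f x = f (e.symm (e x))
      rw [MeasurableEquiv.symm_apply_apply]
    -- sections
    have hsecmeas : ∀ x : ℝ, Measurable (fun y : Fin n → ℝ => h (e.symm (x, y))) :=
      fun x => hh'meas.comp measurable_prodMk_left
    have gsecmeas : ∀ x : ℝ, Measurable (fun y : Fin n → ℝ => g (e.symm (x, y))) :=
      fun x => hg'meas.comp measurable_prodMk_left
    set ν := (Measure.pi fun j => μ (Fin.succAbove 0 j)) with hνdef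
    set H : ℝ → ℝ := fun x => ∫ y, h (e.symm (x, y)) ∂ν with hH
    set G : ℝ → ℝ := fun x => ∫ y, g (e.symm (x, y)) ∂ν with hG
    have Hmeas : Measurable H :=
      (StronglyMeasurable.integral_prod_right'
        (f := fun p : ℝ × (Fin n → ℝ) => h (e.symm p)) hh'meas.stronglyMeasurable).measurable
    have Gmeas : Measurable G :=
      (StronglyMeasurable.integral_prod_right'
        (f := fun p : ℝ × (Fin n → ℝ) => g (e.symm p)) hg'meas.stronglyMeasurable).measurable
    have HC : ∀ x, |H x| ≤ C := fun x =>
      my_abs_integral_le ν (my_int_bdd ν (hsecmeas x) (fun y => hhC _)) (fun y => hhC _)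
    have GC : ∀ x, |G x| ≤ C := fun x =>
      my_abs_integral_le ν (my_int_bdd ν (gsecmeas x) (fun y => hgC _)) (fun y => hgC _)
    have Hmono : Monotone H := by
      intro x x' hx
      refine integral_mono (my_int_bdd ν (hsecmeas x) (fun y => hhC _))
        (my_int_bdd ν (hsecmeas x') (fun y => hhC _)) fun y => ?_
      exact hh'mono (Prod.mk_le_mk.mpr ⟨hx, le_rfl⟩)
    have Gmono : Monotone G := by
      intro x x' hx
      refine integral_mono (my_int_bdd ν (gsecmeas x) (fun y => hgC _))
        (my_int_bdd ν (gsecmeas x') (fun y => hgC _)) fun y => ?_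
      exact hg'mono (Prod.mk_le_mk.mpr ⟨hx, le_rfl⟩)
    have prodbound : ∀ p : ℝ × (Fin n → ℝ), |h (e.symm p) * g (e.symm p)| ≤ C * C := by
      intro p
      rw [abs_mul]
      exact mul_le_mul (hhC _) (hgC _) (abs_nonneg _) hC0
    -- Fubini
    have fub1 : ∫ p, h (e.symm p) * g (e.symm p) ∂((μ 0).prod ν)
        = ∫ x, ∫ y, h (e.symm (x, y)) * g (e.symm (x, y)) ∂ν ∂(μ 0) :=
      integral_prod _ (my_int_bdd _ (hh'meas.mul hg'meas) prodbound)
    have fub2 : ∫ p, h (e.symm p) ∂((μ 0).prod ν) = ∫ x, H x ∂(μ 0) :=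
      integral_prod _ (my_int_bdd _ hh'meas (fun p => hhC _))
    have fub3 : ∫ p, g (e.symm p) ∂((μ 0).prod ν) = ∫ x, G x ∂(μ 0) :=
      integral_prod _ (my_int_bdd _ hg'meas (fun p => hgC _))
    have pointwise : ∀ x, H x * G x ≤ ∫ y, h (e.symm (x, y)) * g (e.symm (x, y)) ∂ν :=
      fun x => ih (fun j => μ (Fin.succAbove 0 j)) (fun j => hprob _)
        (fun y => h (e.symm (x, y))) (fun y => g (e.symm (x, y)))
        (fun y y' hy => hh'mono (Prod.mk_le_mk.mpr ⟨le_rfl, hy⟩))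
        (fun y y' hy => hg'mono (Prod.mk_le_mk.mpr ⟨le_rfl, hy⟩))
        (hsecmeas x) (gsecmeas x) C (fun y => hhC _) (fun y => hgC _)
    have step1 : ∫ x, H x * G x ∂(μ 0)
        ≤ ∫ x, ∫ y, h (e.symm (x, y)) * g (e.symm (x, y)) ∂ν ∂(μ 0) := by
      refine integral_mono (my_int_bdd _ (Hmeas.mul Gmeas) (C := C * C) fun x => ?_)
        (my_int_bdd _ ((StronglyMeasurable.integral_prod_right'
          (f := fun p : ℝ × (Fin n → ℝ) => h (e.symm p) * g (e.symm p))
          (hh'meas.mul hg'meas).stronglyMeasurable).measurable)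
          (C := C * C) fun x => ?_) pointwise
      · rw [abs_mul]; exact mul_le_mul (HC x) (GC x) (abs_nonneg _) hC0
      · exact my_abs_integral_le ν
          (my_int_bdd ν ((hsecmeas x).mul (gsecmeas x)) (fun y => prodbound (x, y)))
          (fun y => prodbound (x, y))
    have step2 : (∫ x, H x ∂(μ 0)) * (∫ x, G x ∂(μ 0)) ≤ ∫ x, H x * G x ∂(μ 0) :=
      my_chebyshev (μ 0) Hmono Gmono Hmeas Gmeas HC GC
    calc (∫ x, h x ∂Measure.pi μ) * ∫ x, g x ∂Measure.pi μ
        = (∫ x, H x ∂(μ 0)) * ∫ x, G x ∂(μ 0) := by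
          rw [transfer h, transfer g, fub2, fub3]
      _ ≤ ∫ x, H x * G x ∂(μ 0) := step2
      _ ≤ ∫ x, ∫ y, h (e.symm (x, y)) * g (e.symm (x, y)) ∂ν ∂(μ 0) := step1
      _ = ∫ x, h x * g x ∂Measure.pi μ := by
          rw [transfer (fun x => h x * g x), fub1]

lemma my_clamp_abs_le {N : ℝ} (hN : 0 ≤ N) (t : ℝ) :
    |max (-N) (min t N)| ≤ |t| := by
  rcases le_total 0 t with ht | ht
  · have hm : 0 ≤ min t N := le_min ht hN
    rw [max_eq_right (le_trans (neg_nonpos.2 hN) hm), abs_of_nonneg hm, abs_of_nonneg ht]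
    exact min_le_left _ _
  · rw [min_eq_left (le_trans ht hN)]
    have hle : max (-N) t ≤ 0 := max_le (neg_nonpos.2 hN) ht
    rw [abs_of_nonpos hle, abs_of_nonpos ht]
    simp [le_max_right]

lemma my_clamp_tendsto (t : ℝ) :
    Filter.Tendsto (fun N : ℕ => max (-(N : ℝ)) (min t N)) Filter.atTop (nhds t) := by
  refine Filter.Tendsto.congr' ?_ tendsto_const_nhds
  filter_upwards [Filter.eventually_ge_atTop ⌈|t|⌉₊] with N hN
  have h1 : |t| ≤ (N : ℝ) := le_trans (Nat.le_ceil _) (Nat.cast_le.2 hN)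
  have h2 : t ≤ (N : ℝ) := le_trans (le_abs_self t) h1
  have h3 : -(N : ℝ) ≤ t := by
    have := neg_abs_le t
    linarith
  rw [min_eq_left h2, max_eq_right h3]

theorem independent_implies_associated
    {Ω : Type*} [MeasurableSpace Ω] (P : Measure Ω) [IsProbabilityMeasure P]
    {n : ℕ} (X : Fin n → Ω → ℝ) (hXmeas : ∀ i, Measurable (X i))
    (hindep : iIndepFun X P)
    (h g : (Fin n → ℝ) → ℝ) (hh : Monotone h) (hg : Monotone g)
    (hhm : Measurable h) (hgm : Measurable g)
    (hh2 : MemLp (fun ω => h fun i => X i ω) 2 P)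
    (hg2 : MemLp (fun ω => g fun i => X i ω) 2 P) :
    0 ≤ (∫ ω, h (fun i => X i ω) * g (fun i => X i ω) ∂P)
        - (∫ ω, h (fun i => X i ω) ∂P) * (∫ ω, g (fun i => X i ω) ∂P) := by
  classical
  set T : Ω → (Fin n → ℝ) := fun ω i => X i ω with hT
  have hTmeas : Measurable T := measurable_pi_lambda _ hXmeas
  haveI : ∀ i, IsProbabilityMeasure (Measure.map (X i) P) :=
    fun i => Measure.isProbabilityMeasure_map (hXmeas i).aemeasurable
  -- joint law is the product measure
  have hmap : Measure.map T P = Measure.pi (fun i => Measure.map (X i) P) := by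
    refine (Measure.pi_eq fun s hs => ?_).symm
    rw [Measure.map_apply hTmeas (MeasurableSet.univ_pi hs)]
    have hpre : T ⁻¹' (Set.pi Set.univ s) = ⋂ i ∈ Finset.univ, X i ⁻¹' s i := by
      ext ω
      simp [Set.mem_pi, hT]
    rw [hpre, hindep.measure_inter_preimage_eq_mul Finset.univ (fun i _ => hs i)]
    refine Finset.prod_congr rfl fun i _ => ?_
    rw [Measure.map_apply (hXmeas i) (hs i)]
  -- transfer integrals
  have transfer : ∀ (f : (Fin n → ℝ) → ℝ), Measurable f →
      ∫ ω, f (T ω) ∂P = ∫ x, f x ∂Measure.pi (fun i => Measure.map (X i) P) := by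
    intro f hf
    rw [← hmap, integral_map hTmeas.aemeasurable hf.aestronglyMeasurable]
  -- truncations
  set hN : ℕ → (Fin n → ℝ) → ℝ := fun N x => max (-(N : ℝ)) (min (h x) N) with hhN
  set gN : ℕ → (Fin n → ℝ) → ℝ := fun N x => max (-(N : ℝ)) (min (g x) N) with hgN
  have hNmono : ∀ N, Monotone (hN N) := fun N a b hab =>
    max_le_max le_rfl (min_le_min (hh hab) le_rfl)
  have gNmono : ∀ N, Monotone (gN N) := fun N a b hab =>
    max_le_max le_rfl (min_le_min (hg hab) le_rfl)
  have hNmeas : ∀ N, Measurable (hN N) := fun N =>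
    measurable_const.max ((hhm.min measurable_const))
  have gNmeas : ∀ N, Measurable (gN N) := fun N =>
    measurable_const.max ((hgm.min measurable_const))
  have hNbdd : ∀ N x, |hN N x| ≤ (N : ℝ) := by
    intro N x
    rw [abs_le]
    exact ⟨le_max_left _ _, max_le (neg_le_self (Nat.cast_nonneg N)) (min_le_right _ _)⟩
  have gNbdd : ∀ N x, |gN N x| ≤ (N : ℝ) := by
    intro N x
    rw [abs_le]
    exact ⟨le_max_left _ _, max_le (neg_le_self (Nat.cast_nonneg N)) (min_le_right _ _)⟩
  have hNabs : ∀ N x, |hN N x| ≤ |h x| := fun N x => my_clamp_abs_le (by positivity) _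
  have gNabs : ∀ N x, |gN N x| ≤ |g x| := fun N x => my_clamp_abs_le (by positivity) _
  -- key finite-N inequality
  have key : ∀ N : ℕ,
      (∫ ω, hN N (T ω) ∂P) * (∫ ω, gN N (T ω) ∂P) ≤ ∫ ω, hN N (T ω) * gN N (T ω) ∂P := by
    intro N
    rw [transfer _ (hNmeas N), transfer _ (gNmeas N),
      transfer (fun x => hN N x * gN N x) ((hNmeas N).mul (gNmeas N))]
    exact my_fkg_pi n _ (fun i => inferInstance) (hN N) (gN N) (hNmono N) (gNmono N)
      (hNmeas N) (gNmeas N) (N : ℝ) (hNbdd N) (gNbdd N)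
  -- integrability of dominating functions
  have Ih : Integrable (fun ω => h (T ω)) P := hh2.integrable one_le_two
  have Ig : Integrable (fun ω => g (T ω)) P := hg2.integrable one_le_two
  have Ihg : Integrable (fun ω => h (T ω) * g (T ω)) P := by
    have := L2.integrable_inner (𝕜 := ℝ) (hh2.toLp _) (hg2.toLp _)
    refine this.congr ?_
    filter_upwards [hh2.coeFn_toLp, hg2.coeFn_toLp] with ω h1 h2
    simp [h1, h2, RCLike.inner_apply, mul_comm, hT]
  -- limits
  have tendA : Filter.Tendsto (fun N : ℕ => ∫ ω, hN N (T ω) * gN N (T ω) ∂P)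
      Filter.atTop (nhds (∫ ω, h (T ω) * g (T ω) ∂P)) := by
    refine tendsto_integral_of_dominated_convergence (fun ω => |h (T ω)| * |g (T ω)|)
      (fun N => (((hNmeas N).comp hTmeas).mul ((gNmeas N).comp hTmeas)).aestronglyMeasurable)
      ?_ ?_ ?_
    · refine (Ihg.abs.congr ?_)
      exact Filter.Eventually.of_forall fun ω => abs_mul _ _
    · intro N
      refine Filter.Eventually.of_forall fun ω => ?_
      rw [Real.norm_eq_abs, abs_mul]
      exact mul_le_mul (hNabs N _) (gNabs N _) (abs_nonneg _) (abs_nonneg _)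
    · exact Filter.Eventually.of_forall fun ω =>
        (my_clamp_tendsto (h (T ω))).mul (my_clamp_tendsto (g (T ω)))
  have tendB : Filter.Tendsto (fun N : ℕ => ∫ ω, hN N (T ω) ∂P)
      Filter.atTop (nhds (∫ ω, h (T ω) ∂P)) := by
    refine tendsto_integral_of_dominated_convergence (fun ω => |h (T ω)|)
      (fun N => ((hNmeas N).comp hTmeas).aestronglyMeasurable) Ih.abs ?_ ?_
    · intro N
      exact Filter.Eventually.of_forall fun ω => by
        rw [Real.norm_eq_abs]; exact hNabs N _
    · exact Filter.Eventually.of_forall fun ω => my_clamp_tendsto (h (T ω))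
  have tendC : Filter.Tendsto (fun N : ℕ => ∫ ω, gN N (T ω) ∂P)
      Filter.atTop (nhds (∫ ω, g (T ω) ∂P)) := by
    refine tendsto_integral_of_dominated_convergence (fun ω => |g (T ω)|)
      (fun N => ((gNmeas N).comp hTmeas).aestronglyMeasurable) Ig.abs ?_ ?_
    · intro N
      exact Filter.Eventually.of_forall fun ω => by
        rw [Real.norm_eq_abs]; exact gNabs N _
    · exact Filter.Eventually.of_forall fun ω => my_clamp_tendsto (g (T ω))
  have final : (∫ ω, h (T ω) ∂P) * (∫ ω, g (T ω) ∂P) ≤ ∫ ω, h (T ω) * g (T ω) ∂P := by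
    refine le_of_tendsto_of_tendsto' (tendB.mul tendC) tendA key
  simpa [hT, sub_nonneg] using final
end

section
/- Let X₁,…,Xₙ be square-integrable associated random variables. Then for real numbers r₁,…,rₙ, the joint characteristic function φ(r) = E[exp(i∑ⱼ rⱼXⱼ)] and the marginal characteristic functions φⱼ(rⱼ) = E[exp(i rⱼXⱼ)] satisfy |φ(r) − ∏ⱼ φⱼ(rⱼ)| ≤ 2 ∑_{1≤k<l≤n} |r_k||r_l| Cov(X_k, X_l). -/
open MeasureTheory
set_option linter.unusedSectionVars false

section Helpers
variable {Ω : Type*} [MeasurableSpace Ω] {P : Measure Ω} [IsProbabilityMeasure P]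

lemma memLp2_bdd {f : Ω → ℝ} (hf : Measurable f) (C : ℝ) (hC : ∀ x, |f x| ≤ C) :
    MemLp f 2 P :=
  MemLp.of_bound hf.aestronglyMeasurable C (ae_of_all _ fun x => by
    simpa [Real.norm_eq_abs] using hC x)

lemma intMul {f g : Ω → ℝ} (hf : MemLp f 2 P) (hg : MemLp g 2 P) :
    Integrable (fun ω => f ω * g ω) P := by
  rw [← memLp_one_iff_integrable]
  haveI : ENNReal.HolderTriple 2 2 1 := ⟨by rw [inv_one, ENNReal.inv_two_add_inv_two]⟩
  have h := hg.smul (φ := f) (r := 1) hf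
  exact h

lemma intBdd {f : Ω → ℝ} (hf : Measurable f) (C : ℝ) (hC : ∀ x, |f x| ≤ C) :
    Integrable f P :=
  (memLp2_bdd hf C hC).integrable one_le_two

lemma memLp2_sum {n : ℕ} (X : Fin n → Ω → ℝ) (hX2 : ∀ i, MemLp (X i) 2 P)
    (c : Fin n → ℝ) : MemLp (fun ω => ∑ i, c i * X i ω) 2 P := by
  have h : (fun ω => ∑ i, c i * X i ω) = ∑ i : Fin n, fun ω => c i * X i ω := by
    funext ω; simp
  rw [h]
  exact memLp_finset_sum' _ fun i _ => (hX2 i).const_mul (c i)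

end Helpers

section Cov
variable {Ω : Type*} [MeasurableSpace Ω] {P : Measure Ω} [IsProbabilityMeasure P]

lemma cov_expand (A B C D : Ω → ℝ) (hA : MemLp A 2 P) (hB : MemLp B 2 P)
    (hC : MemLp C 2 P) (hD : MemLp D 2 P) (s t : ℝ) :
    (∫ ω, (A ω + s * B ω) * (C ω + t * D ω) ∂P)
      - (∫ ω, A ω + s * B ω ∂P) * (∫ ω, C ω + t * D ω ∂P)
    = ((∫ ω, A ω * C ω ∂P) - (∫ ω, A ω ∂P) * (∫ ω, C ω ∂P))
      + t * ((∫ ω, A ω * D ω ∂P) - (∫ ω, A ω ∂P) * (∫ ω, D ω ∂P))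
      + s * ((∫ ω, B ω * C ω ∂P) - (∫ ω, B ω ∂P) * (∫ ω, C ω ∂P))
      + s * t * ((∫ ω, B ω * D ω ∂P) - (∫ ω, B ω ∂P) * (∫ ω, D ω ∂P)) := by
  have iA : Integrable A P := hA.integrable one_le_two
  have iB : Integrable B P := hB.integrable one_le_two
  have iC : Integrable C P := hC.integrable one_le_two
  have iD : Integrable D P := hD.integrable one_le_two
  have i1 : Integrable (fun ω => A ω * C ω) P := intMul hA hC
  have i2 : Integrable (fun ω => A ω * D ω) P := intMul hA hD
  have i3 : Integrable (fun ω => B ω * C ω) P := intMul hB hC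
  have i4 : Integrable (fun ω => B ω * D ω) P := intMul hB hD
  have e1 : (fun ω => (A ω + s * B ω) * (C ω + t * D ω))
      = fun ω => ((A ω * C ω + t * (A ω * D ω)) + s * (B ω * C ω)) + s * t * (B ω * D ω) := by
    funext ω; ring
  have e2 : ∫ ω, (A ω + s * B ω) * (C ω + t * D ω) ∂P
      = (∫ ω, A ω * C ω ∂P) + t * (∫ ω, A ω * D ω ∂P) + s * (∫ ω, B ω * C ω ∂P)
        + s * t * (∫ ω, B ω * D ω ∂P) := by
    have j1 : Integrable (fun ω => A ω * C ω + t * (A ω * D ω)) P := i1.add (i2.const_mul t)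
    have j2 : Integrable (fun ω => A ω * C ω + t * (A ω * D ω) + s * (B ω * C ω)) P :=
      j1.add (i3.const_mul s)
    rw [e1, integral_add j2 (i4.const_mul (s * t)), integral_add j1 (i3.const_mul s),
      integral_add i1 (i2.const_mul t), integral_const_mul, integral_const_mul, integral_const_mul]
  have e3 : ∫ ω, A ω + s * B ω ∂P = (∫ ω, A ω ∂P) + s * ∫ ω, B ω ∂P := by
    rw [integral_add iA (iB.const_mul s), integral_const_mul]
  have e4 : ∫ ω, C ω + t * D ω ∂P = (∫ ω, C ω ∂P) + t * ∫ ω, D ω ∂P := by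
    rw [integral_add iC (iD.const_mul t), integral_const_mul]
  rw [e2, e3, e4]; ring

end Cov

/-- Association of a finite collection of real random variables. -/
def AssociatedRVs {Ω : Type*} [MeasurableSpace Ω] (P : Measure Ω)
    {n : ℕ} (X : Fin n → Ω → ℝ) : Prop :=
  ∀ h g : (Fin n → ℝ) → ℝ, Monotone h → Monotone g → Measurable h → Measurable g →
    MemLp (fun ω => h fun i => X i ω) 2 P →
    MemLp (fun ω => g fun i => X i ω) 2 P →
    0 ≤ (∫ ω, h (fun i => X i ω) * g (fun i => X i ω) ∂P)
        - (∫ ω, h (fun i => X i ω) ∂P) * (∫ ω, g (fun i => X i ω) ∂P)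

section Main
variable {Ω : Type*} [MeasurableSpace Ω] {P : Measure Ω} [IsProbabilityMeasure P]
  {n : ℕ} {X : Fin n → Ω → ℝ}

lemma measurable_lin (c : Fin n → ℝ) : Measurable (fun x : Fin n → ℝ => ∑ i, c i * x i) :=
  Finset.measurable_sum _ fun i _ => (measurable_pi_apply i : Measurable fun x : Fin n → ℝ => x i).const_mul (c i)

lemma cov_abs_le (hXmeas : ∀ i, Measurable (X i)) (hassoc : AssociatedRVs P X)
    (hX2 : ∀ i, MemLp (X i) 2 P)
    (f g : (Fin n → ℝ) → ℝ) (L M : Fin n → ℝ)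
    (hfm : Measurable f) (hgm : Measurable g)
    (hfb : ∀ x, |f x| ≤ 1) (hgb : ∀ x, |g x| ≤ 1)
    (hf1 : Monotone (fun x => (∑ i, L i * x i) + f x))
    (hf2 : Monotone (fun x => (∑ i, L i * x i) - f x))
    (hg1 : Monotone (fun x => (∑ i, M i * x i) + g x))
    (hg2 : Monotone (fun x => (∑ i, M i * x i) - g x)) :
    |(∫ ω, f (fun i => X i ω) * g (fun i => X i ω) ∂P)
      - (∫ ω, f (fun i => X i ω) ∂P) * (∫ ω, g (fun i => X i ω) ∂P)|
    ≤ (∫ ω, (∑ i, L i * X i ω) * (∑ j, M j * X j ω) ∂P)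
      - (∫ ω, ∑ i, L i * X i ω ∂P) * (∫ ω, ∑ j, M j * X j ω ∂P) := by
  have hA : MemLp (fun ω => ∑ i, L i * X i ω) 2 P := memLp2_sum X hX2 L
  have hC : MemLp (fun ω => ∑ i, M i * X i ω) 2 P := memLp2_sum X hX2 M
  have hXv : Measurable (fun ω => (fun i => X i ω)) := measurable_pi_lambda _ hXmeas
  have hB : MemLp (fun ω => f (fun i => X i ω)) 2 P :=
    memLp2_bdd (hfm.comp hXv) 1 (fun ω => hfb _)
  have hD : MemLp (fun ω => g (fun i => X i ω)) 2 P :=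
    memLp2_bdd (hgm.comp hXv) 1 (fun ω => hgb _)
  have happ : ∀ s t : ℝ,
      Monotone (fun x : Fin n → ℝ => (∑ i, L i * x i) + s * f x) →
      Monotone (fun x : Fin n → ℝ => (∑ i, M i * x i) + t * g x) →
      0 ≤ ((∫ ω, (∑ i, L i * X i ω) * (∑ j, M j * X j ω) ∂P)
            - (∫ ω, ∑ i, L i * X i ω ∂P) * (∫ ω, ∑ j, M j * X j ω ∂P))
        + t * ((∫ ω, (∑ i, L i * X i ω) * g (fun i => X i ω) ∂P)
            - (∫ ω, ∑ i, L i * X i ω ∂P) * (∫ ω, g (fun i => X i ω) ∂P))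
        + s * ((∫ ω, f (fun i => X i ω) * (∑ j, M j * X j ω) ∂P)
            - (∫ ω, f (fun i => X i ω) ∂P) * (∫ ω, ∑ j, M j * X j ω ∂P))
        + s * t * ((∫ ω, f (fun i => X i ω) * g (fun i => X i ω) ∂P)
            - (∫ ω, f (fun i => X i ω) ∂P) * (∫ ω, g (fun i => X i ω) ∂P)) := by
    intro s t hm1 hm2
    have hmeas1 : Measurable (fun x : Fin n → ℝ => (∑ i, L i * x i) + s * f x) :=
      (measurable_lin L).add (hfm.const_mul s)
    have hmeas2 : Measurable (fun x : Fin n → ℝ => (∑ i, M i * x i) + t * g x) :=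
      (measurable_lin M).add (hgm.const_mul t)
    have hL1 : MemLp (fun ω => (∑ i, L i * X i ω) + s * f (fun i => X i ω)) 2 P :=
      hA.add (hB.const_mul s)
    have hL2 : MemLp (fun ω => (∑ i, M i * X i ω) + t * g (fun i => X i ω)) 2 P :=
      hC.add (hD.const_mul t)
    have h0 := hassoc (fun x => (∑ i, L i * x i) + s * f x)
      (fun x => (∑ i, M i * x i) + t * g x) hm1 hm2 hmeas1 hmeas2 hL1 hL2
    beta_reduce at h0
    have hexp := cov_expand (fun ω => ∑ i, L i * X i ω) (fun ω => f (fun i => X i ω))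
      (fun ω => ∑ j, M j * X j ω) (fun ω => g (fun i => X i ω)) hA hB hC hD s t
    beta_reduce at hexp
    linarith [h0, hexp]
  have m11 : Monotone (fun x : Fin n → ℝ => (∑ i, L i * x i) + (1:ℝ) * f x) := by
    simpa only [one_mul] using hf1
  have m12 : Monotone (fun x : Fin n → ℝ => (∑ i, L i * x i) + (-1:ℝ) * f x) := by
    simpa only [neg_one_mul, ← sub_eq_add_neg] using hf2
  have m21 : Monotone (fun x : Fin n → ℝ => (∑ i, M i * x i) + (1:ℝ) * g x) := by
    simpa only [one_mul] using hg1
  have m22 : Monotone (fun x : Fin n → ℝ => (∑ i, M i * x i) + (-1:ℝ) * g x) := by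
    simpa only [neg_one_mul, ← sub_eq_add_neg] using hg2
  have h11 := happ 1 1 m11 m21
  have h12 := happ 1 (-1) m11 m22
  have h21 := happ (-1) 1 m12 m21
  have h22 := happ (-1) (-1) m12 m22
  rw [abs_le]
  constructor <;> nlinarith [h11, h12, h21, h22]

lemma cov_linear (hX2 : ∀ i, MemLp (X i) 2 P) (a b : Fin n → ℝ) :
    (∫ ω, (∑ i, a i * X i ω) * (∑ j, b j * X j ω) ∂P)
      - (∫ ω, ∑ i, a i * X i ω ∂P) * (∫ ω, ∑ j, b j * X j ω ∂P)
    = ∑ i, ∑ j, a i * b j *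
        ((∫ ω, X i ω * X j ω ∂P) - (∫ ω, X i ω ∂P) * (∫ ω, X j ω ∂P)) := by
  have e1 : (fun ω => (∑ i, a i * X i ω) * (∑ j, b j * X j ω))
      = fun ω => ∑ i, ∑ j, (a i * b j) * (X i ω * X j ω) := by
    funext ω
    rw [Finset.sum_mul_sum]
    exact Finset.sum_congr rfl fun i _ => Finset.sum_congr rfl fun j _ => by ring
  have h1 : ∫ ω, (∑ i, a i * X i ω) * (∑ j, b j * X j ω) ∂P
      = ∑ i, ∑ j, (a i * b j) * ∫ ω, X i ω * X j ω ∂P := by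
    rw [e1, integral_finset_sum _ fun i _ => integrable_finset_sum _ fun j _ =>
      ((intMul (hX2 i) (hX2 j)).const_mul _)]
    exact Finset.sum_congr rfl fun i _ => by
      rw [integral_finset_sum _ fun j _ => ((intMul (hX2 i) (hX2 j)).const_mul _)]
      exact Finset.sum_congr rfl fun j _ => integral_const_mul _ _
  have h2 : ∀ c : Fin n → ℝ, ∫ ω, ∑ i, c i * X i ω ∂P = ∑ i, c i * ∫ ω, X i ω ∂P := by
    intro c
    rw [integral_finset_sum _ fun i _ => ((hX2 i).integrable one_le_two).const_mul _]
    exact Finset.sum_congr rfl fun i _ => integral_const_mul _ _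
  rw [h1, h2, h2, Finset.sum_mul_sum]
  rw [← Finset.sum_sub_distrib]
  refine Finset.sum_congr rfl fun i _ => ?_
  rw [← Finset.sum_sub_distrib]
  exact Finset.sum_congr rfl fun j _ => by ring

lemma abs_cos_sub_cos_le (u v : ℝ) : |Real.cos u - Real.cos v| ≤ |u - v| := by
  rw [Real.cos_sub_cos]
  rw [abs_mul, abs_mul]
  calc |(-2 : ℝ)| * |Real.sin ((u + v) / 2)| * |Real.sin ((u - v) / 2)|
      ≤ |(-2 : ℝ)| * 1 * |(u - v) / 2| := by
        refine mul_le_mul (mul_le_mul le_rfl (Real.abs_sin_le_one _) (abs_nonneg _)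
          (abs_nonneg _)) Real.abs_sin_le_abs (abs_nonneg _) (by positivity)
    _ = |u - v| := by rw [abs_div]; simp [abs_of_nonneg]; ring
  
lemma abs_sin_sub_sin_le (u v : ℝ) : |Real.sin u - Real.sin v| ≤ |u - v| := by
  rw [Real.sin_sub_sin]
  rw [abs_mul, abs_mul]
  calc |(2 : ℝ)| * |Real.sin ((u - v) / 2)| * |Real.cos ((u + v) / 2)|
      ≤ |(2 : ℝ)| * |(u - v) / 2| * 1 := by
        refine mul_le_mul (mul_le_mul le_rfl Real.abs_sin_le_abs (abs_nonneg _)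
          (abs_nonneg _)) (Real.abs_cos_le_one _) (abs_nonneg _) (by positivity)
    _ = |u - v| := by rw [abs_div]; simp [abs_of_nonneg]; ring

lemma mono_pair (s : Fin n → ℝ) (F : ℝ → ℝ) (hF : ∀ p q : ℝ, |F p - F q| ≤ |p - q|) :
    Monotone (fun x : Fin n → ℝ => (∑ i, |s i| * x i) + F (∑ i, s i * x i)) ∧
    Monotone (fun x : Fin n → ℝ => (∑ i, |s i| * x i) - F (∑ i, s i * x i)) := by
  have key : ∀ x y : Fin n → ℝ, x ≤ y →
      |F (∑ i, s i * y i) - F (∑ i, s i * x i)| ≤ (∑ i, |s i| * y i) - ∑ i, |s i| * x i := by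
    intro x y hxy
    refine (hF _ _).trans ?_
    rw [← Finset.sum_sub_distrib, ← Finset.sum_sub_distrib]
    calc |∑ i, (s i * y i - s i * x i)| ≤ ∑ i, |s i * y i - s i * x i| :=
          Finset.abs_sum_le_sum_abs _ _
      _ = ∑ i, (|s i| * y i - |s i| * x i) := Finset.sum_congr rfl fun i _ => by
          rw [← mul_sub, abs_mul, abs_of_nonneg (sub_nonneg.2 (hxy i)), mul_sub]
  constructor <;> intro x y hxy <;>
    have h := abs_le.1 (key x y hxy) <;> dsimp only <;> linarith [h.1, h.2]

lemma intExp {F : Ω → ℝ} (hF : Measurable F) :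
    Integrable (fun ω => Complex.exp (Complex.I * (F ω : ℂ))) P := by
  have hm : Measurable (fun ω => Complex.exp (Complex.I * (F ω : ℂ))) :=
    Complex.measurable_exp.comp (measurable_const.mul (Complex.measurable_ofReal.comp hF))
  rw [← memLp_one_iff_integrable]
  refine MemLp.of_bound hm.aestronglyMeasurable 1 (ae_of_all _ fun ω => ?_)
  rw [mul_comm, Complex.norm_exp_ofReal_mul_I]

lemma charFun_eq {F : Ω → ℝ} (hF : Measurable F) :
    (∫ ω, Complex.exp (Complex.I * (F ω : ℂ)) ∂P)
      = ↑(∫ ω, Real.cos (F ω) ∂P) + ↑(∫ ω, Real.sin (F ω) ∂P) * Complex.I := by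
  have icos : Integrable (fun ω => Real.cos (F ω)) P :=
    intBdd (Real.measurable_cos.comp hF) 1 fun ω => Real.abs_cos_le_one _
  have isin : Integrable (fun ω => Real.sin (F ω)) P :=
    intBdd (Real.measurable_sin.comp hF) 1 fun ω => Real.abs_sin_le_one _
  have h1 : (fun ω => Complex.exp (Complex.I * (F ω : ℂ)))
      = fun ω => (↑(Real.cos (F ω)) : ℂ) + ↑(Real.sin (F ω)) * Complex.I := by
    funext ω
    rw [mul_comm, Complex.exp_mul_I, ← Complex.ofReal_cos, ← Complex.ofReal_sin]
  have icosC : Integrable (fun ω => ((Real.cos (F ω) : ℝ) : ℂ)) P := icos.ofReal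
  have isinC : Integrable (fun ω => ((Real.sin (F ω) : ℝ) : ℂ)) P := isin.ofReal
  have e2 : ∫ ω, ((Real.cos (F ω) : ℝ) : ℂ) ∂P = ((∫ ω, Real.cos (F ω) ∂P : ℝ) : ℂ) :=
    integral_ofReal
  have e3 : ∫ ω, ((Real.sin (F ω) : ℝ) : ℂ) ∂P = ((∫ ω, Real.sin (F ω) ∂P : ℝ) : ℂ) :=
    integral_ofReal
  rw [h1, integral_add icosC (isinC.mul_const Complex.I), integral_mul_const, e2, e3]

lemma exp_shift (F : Ω → ℝ) (a : ℝ) :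
    Complex.exp (↑a * Complex.I) * ∫ ω, Complex.exp (Complex.I * (F ω : ℂ)) ∂P
      = ∫ ω, Complex.exp (Complex.I * ((F ω + a : ℝ) : ℂ)) ∂P := by
  rw [← integral_const_mul]
  congr 1; funext ω
  rw [← Complex.exp_add]
  congr 1
  push_cast
  ring

lemma exp_neg_arg_mul_self (z : ℂ) :
    Complex.exp (↑(-z.arg) * Complex.I) * z = ((‖z‖ : ℝ) : ℂ) := by
  nth_rewrite 2 [← Complex.norm_mul_exp_arg_mul_I z]
  rw [mul_left_comm, ← Complex.exp_add]
  rw [show (↑(-z.arg) * Complex.I + ↑z.arg * Complex.I : ℂ) = 0 by push_cast; ring,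
    Complex.exp_zero, mul_one]

lemma newman_pair (hXmeas : ∀ i, Measurable (X i)) (hassoc : AssociatedRVs P X)
    (hX2 : ∀ i, MemLp (X i) 2 P) (s t : Fin n → ℝ) :
    ‖(∫ ω, Complex.exp (Complex.I * ((∑ j, (s j + t j) * X j ω : ℝ) : ℂ)) ∂P)
        - (∫ ω, Complex.exp (Complex.I * ((∑ j, s j * X j ω : ℝ) : ℂ)) ∂P)
          * (∫ ω, Complex.exp (Complex.I * ((∑ j, t j * X j ω : ℝ) : ℂ)) ∂P)‖
      ≤ 2 * ∑ i, ∑ j, |s i| * |t j| *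
          ((∫ ω, X i ω * X j ω ∂P) - (∫ ω, X i ω ∂P) * (∫ ω, X j ω ∂P)) := by
  set K := ∑ i, ∑ j, |s i| * |t j| *
      ((∫ ω, X i ω * X j ω ∂P) - (∫ ω, X i ω ∂P) * (∫ ω, X j ω ∂P)) with hK
  have hmS : Measurable (fun ω => ∑ j, s j * X j ω) :=
    Finset.measurable_sum _ fun j _ => (hXmeas j).const_mul (s j)
  have hmT : Measurable (fun ω => ∑ j, t j * X j ω) :=
    Finset.measurable_sum _ fun j _ => (hXmeas j).const_mul (t j)
  have hmST : Measurable (fun ω => ∑ j, (s j + t j) * X j ω) :=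
    Finset.measurable_sum _ fun j _ => (hXmeas j).const_mul (s j + t j)
  set Z := (∫ ω, Complex.exp (Complex.I * ((∑ j, (s j + t j) * X j ω : ℝ) : ℂ)) ∂P)
      - (∫ ω, Complex.exp (Complex.I * ((∑ j, s j * X j ω : ℝ) : ℂ)) ∂P)
        * (∫ ω, Complex.exp (Complex.I * ((∑ j, t j * X j ω : ℝ) : ℂ)) ∂P) with hZ
  have hre : ∀ a : ℝ, (Complex.exp (↑a * Complex.I) * Z).re ≤ 2 * K := by
    intro a
    -- covariance bounds
    have hXv : Measurable (fun ω => (fun i => X i ω)) := measurable_pi_lambda _ hXmeas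
    have hlinS := measurable_lin (n := n) s
    have hlinT := measurable_lin (n := n) t
    have hcc := cov_abs_le hXmeas hassoc hX2
      (fun x => Real.cos ((∑ i, s i * x i) + a)) (fun x => Real.cos (∑ i, t i * x i))
      (fun i => |s i|) (fun i => |t i|)
      (Real.measurable_cos.comp (hlinS.add_const a)) (Real.measurable_cos.comp hlinT)
      (fun x => Real.abs_cos_le_one _) (fun x => Real.abs_cos_le_one _)
      (mono_pair s (fun u => Real.cos (u + a)) (fun p q => by
        simpa using abs_cos_sub_cos_le (p + a) (q + a))).1
      (mono_pair s (fun u => Real.cos (u + a)) (fun p q => by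
        simpa using abs_cos_sub_cos_le (p + a) (q + a))).2
      (mono_pair t Real.cos (fun p q => abs_cos_sub_cos_le p q)).1
      (mono_pair t Real.cos (fun p q => abs_cos_sub_cos_le p q)).2
    have hss := cov_abs_le hXmeas hassoc hX2
      (fun x => Real.sin ((∑ i, s i * x i) + a)) (fun x => Real.sin (∑ i, t i * x i))
      (fun i => |s i|) (fun i => |t i|)
      (Real.measurable_sin.comp (hlinS.add_const a)) (Real.measurable_sin.comp hlinT)
      (fun x => Real.abs_sin_le_one _) (fun x => Real.abs_sin_le_one _)
      (mono_pair s (fun u => Real.sin (u + a)) (fun p q => by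
        simpa using abs_sin_sub_sin_le (p + a) (q + a))).1
      (mono_pair s (fun u => Real.sin (u + a)) (fun p q => by
        simpa using abs_sin_sub_sin_le (p + a) (q + a))).2
      (mono_pair t Real.sin (fun p q => abs_sin_sub_sin_le p q)).1
      (mono_pair t Real.sin (fun p q => abs_sin_sub_sin_le p q)).2
    have hlin := cov_linear (P := P) (X := X) hX2 (fun i => |s i|) (fun j => |t j|)
    beta_reduce at hcc hss hlin
    rw [hlin] at hcc hss
    -- complex side computation
    have e1 : Complex.exp (↑a * Complex.I) * Z
        = (∫ ω, Complex.exp (Complex.I * (((∑ j, (s j + t j) * X j ω) + a : ℝ) : ℂ)) ∂P)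
          - (∫ ω, Complex.exp (Complex.I * (((∑ j, s j * X j ω) + a : ℝ) : ℂ)) ∂P)
            * (∫ ω, Complex.exp (Complex.I * ((∑ j, t j * X j ω : ℝ) : ℂ)) ∂P) := by
      rw [hZ, ← exp_shift (fun ω => ∑ j, (s j + t j) * X j ω) a,
        ← exp_shift (fun ω => ∑ j, s j * X j ω) a]
      ring
    rw [e1, charFun_eq (hmST.add_const a), charFun_eq (hmS.add_const a), charFun_eq hmT]
    have ePtw : ∀ ω : Ω, Real.cos ((∑ j, (s j + t j) * X j ω) + a)
        = Real.cos ((∑ j, s j * X j ω) + a) * Real.cos (∑ j, t j * X j ω)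
          - Real.sin ((∑ j, s j * X j ω) + a) * Real.sin (∑ j, t j * X j ω) := by
      intro ω
      rw [show (∑ j, (s j + t j) * X j ω) + a
          = ((∑ j, s j * X j ω) + a) + (∑ j, t j * X j ω) by
        simp only [add_mul, Finset.sum_add_distrib]; ring, Real.cos_add]
    have icc : Integrable (fun ω => Real.cos ((∑ j, s j * X j ω) + a)
        * Real.cos (∑ j, t j * X j ω)) P := by
      refine intBdd (((Real.measurable_cos.comp (hmS.add_const a))).mul
        (Real.measurable_cos.comp hmT)) 1 fun ω => ?_
      rw [abs_mul]
      exact mul_le_one₀ (Real.abs_cos_le_one _) (abs_nonneg _) (Real.abs_cos_le_one _)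
    have iss : Integrable (fun ω => Real.sin ((∑ j, s j * X j ω) + a)
        * Real.sin (∑ j, t j * X j ω)) P := by
      refine intBdd (((Real.measurable_sin.comp (hmS.add_const a))).mul
        (Real.measurable_sin.comp hmT)) 1 fun ω => ?_
      rw [abs_mul]
      exact mul_le_one₀ (Real.abs_sin_le_one _) (abs_nonneg _) (Real.abs_sin_le_one _)
    have e2 : ∫ ω, Real.cos ((∑ j, (s j + t j) * X j ω) + a) ∂P
        = (∫ ω, Real.cos ((∑ j, s j * X j ω) + a) * Real.cos (∑ j, t j * X j ω) ∂P)
          - ∫ ω, Real.sin ((∑ j, s j * X j ω) + a) * Real.sin (∑ j, t j * X j ω) ∂P := by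
      rw [show (fun ω => Real.cos ((∑ j, (s j + t j) * X j ω) + a))
          = fun ω => Real.cos ((∑ j, s j * X j ω) + a) * Real.cos (∑ j, t j * X j ω)
            - Real.sin ((∑ j, s j * X j ω) + a) * Real.sin (∑ j, t j * X j ω) from
        funext ePtw, integral_sub icc iss]
    have hreZ : ((↑(∫ ω, Real.cos ((∑ j, (s j + t j) * X j ω) + a) ∂P) : ℂ)
        + ↑(∫ ω, Real.sin ((∑ j, (s j + t j) * X j ω) + a) ∂P) * Complex.I
        - (↑(∫ ω, Real.cos ((∑ j, s j * X j ω) + a) ∂P)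
            + ↑(∫ ω, Real.sin ((∑ j, s j * X j ω) + a) ∂P) * Complex.I)
          * (↑(∫ ω, Real.cos (∑ j, t j * X j ω) ∂P)
            + ↑(∫ ω, Real.sin (∑ j, t j * X j ω) ∂P) * Complex.I)).re
        = (∫ ω, Real.cos ((∑ j, (s j + t j) * X j ω) + a) ∂P)
          - ((∫ ω, Real.cos ((∑ j, s j * X j ω) + a) ∂P)
              * (∫ ω, Real.cos (∑ j, t j * X j ω) ∂P)
            - (∫ ω, Real.sin ((∑ j, s j * X j ω) + a) ∂P)
              * (∫ ω, Real.sin (∑ j, t j * X j ω) ∂P)) := by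
      simp [Complex.add_re, Complex.sub_re, Complex.mul_re]
    rw [hreZ, e2]
    have h1 := abs_le.1 hcc
    have h2 := abs_le.1 hss
    linarith [h1.1, h1.2, h2.1, h2.2]
  have hZarg : Complex.exp (↑(-Z.arg) * Complex.I) * Z = ((‖Z‖ : ℝ) : ℂ) :=
    exp_neg_arg_mul_self Z
  have hfin := hre (-Z.arg)
  rw [hZarg] at hfin
  simpa using hfin

lemma step_bound (hXmeas : ∀ i, Measurable (X i)) (hassoc : AssociatedRVs P X)
    (hX2 : ∀ i, MemLp (X i) 2 P) (r : Fin n → ℝ) (k : ℕ) (hk : k < n) :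
    ‖(∫ ω, Complex.exp (Complex.I *
          ((∑ j : Fin n, (if (j : ℕ) < k + 1 then r j else 0) * X j ω : ℝ) : ℂ)) ∂P)
        - (∫ ω, Complex.exp (Complex.I *
            ((∑ j : Fin n, (if (j : ℕ) < k then r j else 0) * X j ω : ℝ) : ℂ)) ∂P)
          * (∫ ω, Complex.exp (Complex.I * ((r ⟨k, hk⟩ * X ⟨k, hk⟩ ω : ℝ) : ℂ)) ∂P)‖
      ≤ 2 * ∑ i : Fin n, ∑ j : Fin n, (if (i : ℕ) < k ∧ (j : ℕ) = k then |r i| * |r j| *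
          ((∫ ω, X i ω * X j ω ∂P) - (∫ ω, X i ω ∂P) * (∫ ω, X j ω ∂P)) else 0) := by
  set k' : Fin n := ⟨k, hk⟩ with hk'
  have hNP := newman_pair hXmeas hassoc hX2 (fun j => if (j : ℕ) < k then r j else 0)
    (fun j => if j = k' then r j else 0)
  have hptw1 : ∀ ω : Ω, (∑ j : Fin n, ((if (j : ℕ) < k then r j else 0)
      + (if j = k' then r j else 0)) * X j ω)
      = ∑ j : Fin n, (if (j : ℕ) < k + 1 then r j else 0) * X j ω := by
    intro ω
    refine Finset.sum_congr rfl fun j _ => ?_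
    congr 1
    by_cases h2 : j = k'
    · subst h2
      simp [hk']
    · have h3 : (j : ℕ) ≠ k := fun e => h2 (Fin.ext e)
      rw [if_neg h2, add_zero]
      by_cases h1 : (j : ℕ) < k
      · rw [if_pos h1, if_pos (by omega)]
      · rw [if_neg h1, if_neg (by omega)]
  have hptw2 : ∀ ω : Ω, (∑ j : Fin n, (if j = k' then r j else 0) * X j ω) = r k' * X k' ω := by
    intro ω
    rw [Finset.sum_congr rfl fun j _ => ite_mul (j = k') (r j) 0 (X j ω)]
    simp
  simp only [hptw1, hptw2] at hNP
  refine hNP.trans (le_of_eq ?_)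
  congr 1
  refine Finset.sum_congr rfl fun i _ => Finset.sum_congr rfl fun j _ => ?_
  by_cases h2 : j = k'
  · subst h2
    by_cases h1 : (i : ℕ) < k
    · simp [h1, hk']
    · simp [h1, hk']
  · have h3 : (j : ℕ) ≠ k := fun e => h2 (Fin.ext e)
    simp [h2, h3]

end Main

/-- Newman's inequality for characteristic functions of associated random variables. -/
theorem newman_characteristic_function_inequality
    {Ω : Type*} [MeasurableSpace Ω] (P : Measure Ω) [IsProbabilityMeasure P]
    {n : ℕ} (X : Fin n → Ω → ℝ) (hXmeas : ∀ i, Measurable (X i))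
    (hassoc : AssociatedRVs P X) (hX2 : ∀ i, MemLp (X i) 2 P) (r : Fin n → ℝ) :
    ‖(∫ ω, Complex.exp (Complex.I * ((∑ j, r j * X j ω : ℝ) : ℂ)) ∂P)
        - ∏ j, ∫ ω, Complex.exp (Complex.I * ((r j * X j ω : ℝ) : ℂ)) ∂P‖
      ≤ 2 * ∑ p ∈ Finset.univ.filter (fun p : Fin n × Fin n => p.1 < p.2),
          |r p.1| * |r p.2| *
            ((∫ ω, X p.1 ω * X p.2 ω ∂P)
              - (∫ ω, X p.1 ω ∂P) * (∫ ω, X p.2 ω ∂P)) := by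
  classical
  set φ : Fin n → ℂ := fun j => ∫ ω, Complex.exp (Complex.I * ((r j * X j ω : ℝ) : ℂ)) ∂P
    with hφ
  set T : ℕ → ℂ := fun k => ∫ ω, Complex.exp (Complex.I *
      ((∑ j : Fin n, (if (j : ℕ) < k then r j else 0) * X j ω : ℝ) : ℂ)) ∂P with hT
  set A : ℕ → ℂ := fun k =>
    T k * ∏ j ∈ Finset.univ.filter fun j : Fin n => k ≤ (j : ℕ), φ j with hA
  have hφle : ∀ j, ‖φ j‖ ≤ 1 := by
    intro j
    simp only [hφ]
    refine (norm_integral_le_integral_norm _).trans ?_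
    have h1 : ∀ ω : Ω, ‖Complex.exp (Complex.I * ((r j * X j ω : ℝ) : ℂ))‖ = 1 := fun ω => by
      rw [mul_comm, Complex.norm_exp_ofReal_mul_I]
    simp only [h1]
    simp
  have hA0 : A 0 = ∏ j, φ j := by
    simp only [hA]
    have h1 : ∀ ω : Ω, (∑ j : Fin n, (if (j : ℕ) < 0 then r j else 0) * X j ω) = 0 := by
      intro ω; simp
    have h2 : T 0 = 1 := by
      rw [hT]; simp only [h1]; simp
    rw [h2, one_mul, Finset.filter_true_of_mem fun j _ => Nat.zero_le _]
  have hAn : A n = ∫ ω, Complex.exp (Complex.I * ((∑ j, r j * X j ω : ℝ) : ℂ)) ∂P := by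
    simp only [hA]
    have h1 : ∀ ω : Ω, (∑ j : Fin n, (if (j : ℕ) < n then r j else 0) * X j ω)
        = ∑ j, r j * X j ω :=
      fun ω => Finset.sum_congr rfl fun j _ => by rw [if_pos j.isLt]
    have h2 : T n = ∫ ω, Complex.exp (Complex.I * ((∑ j, r j * X j ω : ℝ) : ℂ)) ∂P := by
      rw [hT]; simp only [h1]
    rw [h2, Finset.filter_false_of_mem fun j _ => by omega, Finset.prod_empty, mul_one]
  have hstep : ∀ k, k < n → ‖A (k + 1) - A k‖
      ≤ 2 * ∑ i : Fin n, ∑ j : Fin n, (if (i : ℕ) < k ∧ (j : ℕ) = k then |r i| * |r j| *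
          ((∫ ω, X i ω * X j ω ∂P) - (∫ ω, X i ω ∂P) * (∫ ω, X j ω ∂P)) else 0) := by
    intro k hk
    set k' : Fin n := ⟨k, hk⟩ with hk'
    have hfilter : (Finset.univ.filter fun j : Fin n => k ≤ (j : ℕ))
        = insert k' (Finset.univ.filter fun j : Fin n => k + 1 ≤ (j : ℕ)) := by
      ext j
      simp only [Finset.mem_filter, Finset.mem_insert, Finset.mem_univ, true_and, hk',
        Fin.ext_iff]
      omega
    have hnot : k' ∉ Finset.univ.filter fun j : Fin n => k + 1 ≤ (j : ℕ) := by
      simp [hk']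
    have hAdiff : A (k + 1) - A k
        = (T (k + 1) - T k * φ k') * ∏ j ∈ Finset.univ.filter
            fun j : Fin n => k + 1 ≤ (j : ℕ), φ j := by
      rw [hA]
      simp only []
      rw [hfilter, Finset.prod_insert hnot]
      ring
    rw [hAdiff, norm_mul]
    have hprod : ‖∏ j ∈ Finset.univ.filter fun j : Fin n => k + 1 ≤ (j : ℕ), φ j‖ ≤ 1 := by
      rw [norm_prod]
      exact Finset.prod_le_one (fun j _ => norm_nonneg _) fun j _ => hφle j
    have hmain : ‖T (k + 1) - T k * φ k'‖
        ≤ 2 * ∑ i : Fin n, ∑ j : Fin n, (if (i : ℕ) < k ∧ (j : ℕ) = k then |r i| * |r j| *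
            ((∫ ω, X i ω * X j ω ∂P) - (∫ ω, X i ω ∂P) * (∫ ω, X j ω ∂P)) else 0) :=
      step_bound hXmeas hassoc hX2 r k hk
    calc ‖T (k + 1) - T k * φ k'‖ * ‖∏ j ∈ Finset.univ.filter
          fun j : Fin n => k + 1 ≤ (j : ℕ), φ j‖
        ≤ ‖T (k + 1) - T k * φ k'‖ * 1 := by
          exact mul_le_mul_of_nonneg_left hprod (norm_nonneg _)
      _ = ‖T (k + 1) - T k * φ k'‖ := mul_one _
      _ ≤ _ := hmain
  have hsum : ∑ k ∈ Finset.range n, (2 * ∑ i : Fin n, ∑ j : Fin n,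
        (if (i : ℕ) < k ∧ (j : ℕ) = k then |r i| * |r j| *
          ((∫ ω, X i ω * X j ω ∂P) - (∫ ω, X i ω ∂P) * (∫ ω, X j ω ∂P)) else 0))
      = 2 * ∑ p ∈ Finset.univ.filter (fun p : Fin n × Fin n => p.1 < p.2),
          |r p.1| * |r p.2| *
            ((∫ ω, X p.1 ω * X p.2 ω ∂P)
              - (∫ ω, X p.1 ω ∂P) * (∫ ω, X p.2 ω ∂P)) := by
    rw [← Finset.mul_sum]
    congr 1
    rw [Finset.sum_comm]
    have hinner : ∀ i : Fin n, ∑ k ∈ Finset.range n, ∑ j : Fin n,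
        (if (i : ℕ) < k ∧ (j : ℕ) = k then |r i| * |r j| *
          ((∫ ω, X i ω * X j ω ∂P) - (∫ ω, X i ω ∂P) * (∫ ω, X j ω ∂P)) else 0)
        = ∑ j : Fin n, (if i < j then |r i| * |r j| *
          ((∫ ω, X i ω * X j ω ∂P) - (∫ ω, X i ω ∂P) * (∫ ω, X j ω ∂P)) else 0) := by
      intro i
      rw [Finset.sum_comm]
      refine Finset.sum_congr rfl fun j _ => ?_
      have h1 : ∀ b ∈ Finset.range n, b ≠ (j : ℕ) →
          (if (i : ℕ) < b ∧ (j : ℕ) = b then |r i| * |r j| *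
            ((∫ ω, X i ω * X j ω ∂P) - (∫ ω, X i ω ∂P) * (∫ ω, X j ω ∂P)) else 0) = 0 := by
        intro b _ hb
        rw [if_neg fun hcon => hb hcon.2.symm]
      rw [Finset.sum_eq_single_of_mem (j : ℕ) (Finset.mem_range.2 j.isLt) h1]
      refine if_congr ?_ rfl rfl
      constructor
      · rintro ⟨h, -⟩
        exact h
      · intro h
        exact ⟨h, rfl⟩
    rw [Finset.sum_congr rfl fun i _ => hinner i, Finset.sum_filter, Fintype.sum_prod_type]
  calc ‖(∫ ω, Complex.exp (Complex.I * ((∑ j, r j * X j ω : ℝ) : ℂ)) ∂P) - ∏ j, φ j‖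
      = ‖A n - A 0‖ := by rw [hAn, hA0]
    _ = ‖∑ k ∈ Finset.range n, (A (k + 1) - A k)‖ := by rw [Finset.sum_range_sub]
    _ ≤ ∑ k ∈ Finset.range n, ‖A (k + 1) - A k‖ := norm_sum_le _ _
    _ ≤ ∑ k ∈ Finset.range n, (2 * ∑ i : Fin n, ∑ j : Fin n,
          (if (i : ℕ) < k ∧ (j : ℕ) = k then |r i| * |r j| *
            ((∫ ω, X i ω * X j ω ∂P) - (∫ ω, X i ω ∂P) * (∫ ω, X j ω ∂P)) else 0)) :=
        Finset.sum_le_sum fun k hk => hstep k (Finset.mem_range.1 hk)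
    _ = _ := hsum
end

section
/- For the Deshpande kernel with 0 < b < 1 and exponential F, the projection variance equals ξ₁ = Var(ρ₁(X₁)) = (1/4)·{1 + b/(2+b) + 1/(2b+1) + 2(1−b)/(1+b) − 2b/(1+b+b²) − 4/(b+1)²}. -/
open MeasureTheory

lemma int_exp_neg_mul_aux (c : ℝ) (hc : 0 < c) :
    ∫ x in Set.Ioi (0 : ℝ), Real.exp (-(c * x)) = 1 / c := by
  have hderiv : ∀ x ∈ Set.Ici (0:ℝ),
      HasDerivAt (fun x => -Real.exp (-(c * x)) / c) (Real.exp (-(c * x))) x := by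
    intro x _
    have h : HasDerivAt (fun x => -(c * x)) (-c) x := by
      simpa [Pi.neg_def] using ((hasDerivAt_id x).const_mul c).neg
    have h2 : HasDerivAt (fun x => -Real.exp (-(c * x)) / c) _ x := (h.exp).neg.div_const c
    convert h2 using 1
    field_simp
  have hint : IntegrableOn (fun x => Real.exp (-(c * x))) (Set.Ioi (0:ℝ)) := by
    have := exp_neg_integrableOn_Ioi 0 hc
    simp only [neg_mul] at this
    exact this
  have htend : Filter.Tendsto (fun x => -Real.exp (-(c * x)) / c) Filter.atTop (nhds 0) := by
    have h1 : Filter.Tendsto (fun x : ℝ => -(c * x)) Filter.atTop Filter.atBot :=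
      Filter.tendsto_neg_atBot_iff.mpr (Filter.tendsto_id.const_mul_atTop hc)
    have h2 := (Real.tendsto_exp_atBot.comp h1).neg.div_const c
    simpa using h2
  have h3 := integral_Ioi_of_hasDerivAt_of_tendsto' hderiv hint htend
  rw [h3]
  simp
  ring

lemma int_exp_neg_mul_aux' (c : ℝ) (hc : 0 < c) :
    IntegrableOn (fun x => Real.exp (-(c * x))) (Set.Ioi (0:ℝ)) := by
  have := exp_neg_integrableOn_Ioi 0 hc
  simp only [neg_mul] at this
  exact this

set_option maxHeartbeats 1600000 in
/-- Projection variance of the Deshpande kernel under the standard exponential distribution. -/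
theorem deshpande_projection_variance (b : ℝ) (hb0 : 0 < b) (hb1 : b < 1)
    (ρ₁ : ℝ → ℝ)
    (hρ₁ : ∀ x : ℝ, ρ₁ x = (Real.exp (-(b * x)) + 1 - Real.exp (-(x / b))) / 2) :
    (∫ x in Set.Ioi (0 : ℝ), (ρ₁ x) ^ 2 * Real.exp (-x)) - (1 / (b + 1)) ^ 2
      = (1 / 4) * (1 + b / (2 + b) + 1 / (2 * b + 1) + 2 * (1 - b) / (1 + b)
          - 2 * b / (1 + b + b ^ 2) - 4 / (b + 1) ^ 2) := by
  have hbne : b ≠ 0 := ne_of_gt hb0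
  have hc1 : (0:ℝ) < 2 * b + 1 := by linarith
  have hc2 : (0:ℝ) < 1 := one_pos
  have hc3 : (0:ℝ) < 2 / b + 1 := by positivity
  have hc4 : (0:ℝ) < b + 1 := by linarith
  have hc5 : (0:ℝ) < b + 1 / b + 1 := by positivity
  have hc6 : (0:ℝ) < 1 / b + 1 := by positivity
  have key : ∀ x : ℝ, (ρ₁ x) ^ 2 * Real.exp (-x)
      = (1/4) * (Real.exp (-((2*b+1) * x)) + Real.exp (-(1 * x))
          + Real.exp (-((2/b+1) * x)) + 2 * Real.exp (-((b+1) * x))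
          - 2 * Real.exp (-((b+1/b+1) * x)) - 2 * Real.exp (-((1/b+1) * x))) := by
    intro x
    rw [hρ₁]
    have hq : Real.exp (-(x / b)) = Real.exp (-(1/b * x)) := by
      congr 1; field_simp
    have hr : Real.exp (-x) = Real.exp (-(1 * x)) := by norm_num
    rw [hq, hr]
    have e1 : Real.exp (-(b*x)) * Real.exp (-(b*x)) * Real.exp (-(1*x))
        = Real.exp (-((2*b+1) * x)) := by
      rw [← Real.exp_add, ← Real.exp_add]; congr 1; ring
    have e2 : Real.exp (-(1/b*x)) * Real.exp (-(1/b*x)) * Real.exp (-(1*x))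
        = Real.exp (-((2/b+1) * x)) := by
      rw [← Real.exp_add, ← Real.exp_add]; congr 1; field_simp; ring
    have e3 : Real.exp (-(b*x)) * Real.exp (-(1*x)) = Real.exp (-((b+1) * x)) := by
      rw [← Real.exp_add]; congr 1; ring
    have e4 : Real.exp (-(b*x)) * Real.exp (-(1/b*x)) * Real.exp (-(1*x))
        = Real.exp (-((b+1/b+1) * x)) := by
      rw [← Real.exp_add, ← Real.exp_add]; congr 1; ring
    have e5 : Real.exp (-(1/b*x)) * Real.exp (-(1*x)) = Real.exp (-((1/b+1) * x)) := by
      rw [← Real.exp_add]; congr 1; ring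
    linear_combination (1/4) * e1 + (1/4) * e2 + (1/2) * e3 - (1/2) * e4 - (1/2) * e5
  simp_rw [key]
  rw [MeasureTheory.integral_const_mul]
  have i1 := int_exp_neg_mul_aux _ hc1
  have i2 := int_exp_neg_mul_aux _ hc2
  have i3 := int_exp_neg_mul_aux _ hc3
  have i4 := int_exp_neg_mul_aux _ hc4
  have i5 := int_exp_neg_mul_aux _ hc5
  have i6 := int_exp_neg_mul_aux _ hc6
  have j1 := int_exp_neg_mul_aux' _ hc1
  have j2 := int_exp_neg_mul_aux' _ hc2
  have j3 := int_exp_neg_mul_aux' _ hc3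
  have j4 := int_exp_neg_mul_aux' _ hc4
  have j5 := int_exp_neg_mul_aux' _ hc5
  have j6 := int_exp_neg_mul_aux' _ hc6
  rw [integral_sub, integral_sub, integral_add, integral_add, integral_add,
      integral_const_mul, integral_const_mul, integral_const_mul,
      i1, i2, i3, i4, i5, i6]
  rotate_left
  · exact j1
  · exact j2
  · exact j1.add j2
  · exact j3
  · exact (j1.add j2).add j3
  · exact j4.const_mul 2
  · exact ((j1.add j2).add j3).add (j4.const_mul 2)
  · exact j5.const_mul 2
  · exact (((j1.add j2).add j3).add (j4.const_mul 2)).sub (j5.const_mul 2)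
  · exact j6.const_mul 2
  have d1 : (2:ℝ) + b ≠ 0 := by linarith
  have d2 : (2:ℝ) * b + 1 ≠ 0 := by linarith
  have d3 : (1:ℝ) + b ≠ 0 := by linarith
  have d4 : (1:ℝ) + b + b ^ 2 ≠ 0 := by nlinarith
  have d5 : b + 1 ≠ 0 := by linarith
  field_simp
  ring
end

section
/- For the Ahmad kernel ρ(x₁,x₂) = (1/2)[(3x₁−x₂)1{x₂>x₁} + (3x₂−x₁)1{x₁>x₂}] and X₁, X₂ i.i.d. exponential with mean μ, one has E[ρ(X₁,X₂)] = 0 and Var(ρ₁(X₁)) = μ²/12, so that the i.i.d. asymptotic variance of √n·δ_{F_n} equals 4·μ²/12 = μ²/3. -/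
open MeasureTheory
open Set Filter Real

lemma tendsto_poly2_exp (a c0 c1 c2 : ℝ) (ha : 0 < a) :
    Tendsto (fun y : ℝ => (c2 * y ^ 2 + c1 * y + c0) * Real.exp (-(a * y))) atTop (nhds 0) := by
  have h0 := Real.tendsto_exp_neg_atTop_nhds_zero
  have h1 := Real.tendsto_pow_mul_exp_neg_atTop_nhds_zero 1
  have h2 := Real.tendsto_pow_mul_exp_neg_atTop_nhds_zero 2
  have key : Tendsto (fun t : ℝ => (c2 / a ^ 2) * (t ^ 2 * Real.exp (-t))
      + (c1 / a) * (t ^ 1 * Real.exp (-t)) + c0 * Real.exp (-t)) atTop (nhds 0) := by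
    have := ((h2.const_mul (c2 / a ^ 2)).add (h1.const_mul (c1 / a))).add (h0.const_mul c0)
    simpa using this
  have hcomp := key.comp (tendsto_id.const_mul_atTop ha)
  refine hcomp.congr fun y => ?_
  simp only [Function.comp_apply, id]
  field_simp

lemma hasDerivAt_poly_exp (a b0 b1 b2 : ℝ) (y : ℝ) :
    HasDerivAt (fun y : ℝ => (b2 * y ^ 2 + b1 * y + b0) * Real.exp (-(a * y)))
      ((2 * b2 * y + b1 - a * (b2 * y ^ 2 + b1 * y + b0)) * Real.exp (-(a * y))) y := by
  have hlin : HasDerivAt (fun y : ℝ => -(a * y)) (-a) y := by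
    simpa [Pi.neg_def] using ((hasDerivAt_id y).const_mul a).neg
  have hexp : HasDerivAt (fun y : ℝ => Real.exp (-(a * y))) (Real.exp (-(a * y)) * (-a)) y :=
    hlin.exp
  have hpoly : HasDerivAt (fun y : ℝ => b2 * y ^ 2 + b1 * y + b0) (2 * b2 * y + b1) y := by
    have : HasDerivAt (fun y : ℝ => b2 * y ^ 2 + b1 * y + b0) (b2 * (2 * y) + b1) y := by
      exact (((hasDerivAt_pow 2 y).const_mul b2).add ((hasDerivAt_id y).const_mul b1)).add_const b0
        |>.congr_deriv (by ring)
    simpa [mul_comm] using this.congr_deriv (by ring)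
  have := hpoly.mul hexp
  refine this.congr_deriv ?_
  ring

lemma exp_int0 (a c : ℝ) (ha : 0 < a) :
    IntegrableOn (fun y : ℝ => Real.exp (-(a * y))) (Ioi c) ∧
      ∫ y in Ioi c, Real.exp (-(a * y)) = Real.exp (-(a * c)) / a := by
  have hd : ∀ y ∈ Ici c, HasDerivAt
      (fun y : ℝ => (0 * y ^ 2 + 0 * y + (-(1/a))) * Real.exp (-(a * y)))
      (Real.exp (-(a * y))) y := by
    intro y _
    have := hasDerivAt_poly_exp a (-(1/a)) 0 0 y
    refine this.congr_deriv ?_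
    field_simp
    ring
  have hpos : ∀ y ∈ Ioi c, (0:ℝ) ≤ Real.exp (-(a * y)) := fun y _ => (Real.exp_pos _).le
  have ht := tendsto_poly2_exp a (-(1/a)) 0 0 ha
  refine ⟨integrableOn_Ioi_deriv_of_nonneg' hd hpos ht, ?_⟩
  rw [integral_Ioi_of_hasDerivAt_of_nonneg' hd hpos ht]
  field_simp
  ring

lemma exp_int1 (a c : ℝ) (ha : 0 < a) (hc : 0 ≤ c) :
    IntegrableOn (fun y : ℝ => y * Real.exp (-(a * y))) (Ioi c) ∧
      ∫ y in Ioi c, y * Real.exp (-(a * y)) = (c / a + 1 / a ^ 2) * Real.exp (-(a * c)) := by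
  have hd : ∀ y ∈ Ici c, HasDerivAt
      (fun y : ℝ => (0 * y ^ 2 + (-(1/a)) * y + (-(1/a^2))) * Real.exp (-(a * y)))
      (y * Real.exp (-(a * y))) y := by
    intro y _
    have := hasDerivAt_poly_exp a (-(1/a^2)) (-(1/a)) 0 y
    refine this.congr_deriv ?_
    field_simp
    ring
  have hpos : ∀ y ∈ Ioi c, (0:ℝ) ≤ y * Real.exp (-(a * y)) := fun y hy =>
    mul_nonneg (hc.trans (le_of_lt hy)) (Real.exp_pos _).le
  have ht := tendsto_poly2_exp a (-(1/a^2)) (-(1/a)) 0 ha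
  refine ⟨integrableOn_Ioi_deriv_of_nonneg' hd hpos ht, ?_⟩
  rw [integral_Ioi_of_hasDerivAt_of_nonneg' hd hpos ht]
  field_simp
  ring

lemma exp_int2 (a c : ℝ) (ha : 0 < a) (hc : 0 ≤ c) :
    IntegrableOn (fun y : ℝ => y ^ 2 * Real.exp (-(a * y))) (Ioi c) ∧
      ∫ y in Ioi c, y ^ 2 * Real.exp (-(a * y))
        = (c ^ 2 / a + 2 * c / a ^ 2 + 2 / a ^ 3) * Real.exp (-(a * c)) := by
  have hd : ∀ y ∈ Ici c, HasDerivAt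
      (fun y : ℝ => ((-(1/a)) * y ^ 2 + (-(2/a^2)) * y + (-(2/a^3))) * Real.exp (-(a * y)))
      (y ^ 2 * Real.exp (-(a * y))) y := by
    intro y _
    have := hasDerivAt_poly_exp a (-(2/a^3)) (-(2/a^2)) (-(1/a)) y
    refine this.congr_deriv ?_
    field_simp
    ring
  have hpos : ∀ y ∈ Ioi c, (0:ℝ) ≤ y ^ 2 * Real.exp (-(a * y)) := fun y hy =>
    mul_nonneg (sq_nonneg _) (Real.exp_pos _).le
  have ht := tendsto_poly2_exp a (-(2/a^3)) (-(2/a^2)) (-(1/a)) ha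
  refine ⟨integrableOn_Ioi_deriv_of_nonneg' hd hpos ht, ?_⟩
  rw [integral_Ioi_of_hasDerivAt_of_nonneg' hd hpos ht]
  field_simp
  ring

lemma comb6 (μ c1 c2 c3 c4 c5 c6 : ℝ) (hμ : 0 < μ) :
    ∫ x in Ioi (0:ℝ), (c1 * Real.exp (-(μ⁻¹ * x)) + c2 * (x * Real.exp (-(μ⁻¹ * x)))
        + c3 * (x ^ 2 * Real.exp (-(μ⁻¹ * x))) + c4 * Real.exp (-(2 * μ⁻¹ * x))
        + c5 * (x * Real.exp (-(2 * μ⁻¹ * x))) + c6 * Real.exp (-(3 * μ⁻¹ * x)))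
      = c1 * μ + c2 * μ ^ 2 + c3 * (2 * μ ^ 3) + c4 * (μ / 2) + c5 * (μ ^ 2 / 4)
        + c6 * (μ / 3) := by
  have ha1 : (0:ℝ) < μ⁻¹ := inv_pos.2 hμ
  have ha2 : (0:ℝ) < 2 * μ⁻¹ := by positivity
  have ha3 : (0:ℝ) < 3 * μ⁻¹ := by positivity
  obtain ⟨i1, v1⟩ := exp_int0 μ⁻¹ 0 ha1
  obtain ⟨i2, v2⟩ := exp_int1 μ⁻¹ 0 ha1 le_rfl
  obtain ⟨i3, v3⟩ := exp_int2 μ⁻¹ 0 ha1 le_rfl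
  obtain ⟨i4, v4⟩ := exp_int0 (2 * μ⁻¹) 0 ha2
  obtain ⟨i5, v5⟩ := exp_int1 (2 * μ⁻¹) 0 ha2 le_rfl
  obtain ⟨i6, v6⟩ := exp_int0 (3 * μ⁻¹) 0 ha3
  have h1 := i1.const_mul c1
  have h2 := i2.const_mul c2
  have h3 := i3.const_mul c3
  have h4 := i4.const_mul c4
  have h5 := i5.const_mul c5
  have h6 := i6.const_mul c6
  have h12 : Integrable (fun x : ℝ => c1 * Real.exp (-(μ⁻¹ * x))
      + c2 * (x * Real.exp (-(μ⁻¹ * x)))) (volume.restrict (Ioi 0)) := h1.add h2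
  have h13 : Integrable (fun x : ℝ => c1 * Real.exp (-(μ⁻¹ * x))
      + c2 * (x * Real.exp (-(μ⁻¹ * x))) + c3 * (x ^ 2 * Real.exp (-(μ⁻¹ * x))))
      (volume.restrict (Ioi 0)) := h12.add h3
  have h14 : Integrable (fun x : ℝ => c1 * Real.exp (-(μ⁻¹ * x))
      + c2 * (x * Real.exp (-(μ⁻¹ * x))) + c3 * (x ^ 2 * Real.exp (-(μ⁻¹ * x)))
      + c4 * Real.exp (-(2 * μ⁻¹ * x))) (volume.restrict (Ioi 0)) := h13.add h4
  have h15 : Integrable (fun x : ℝ => c1 * Real.exp (-(μ⁻¹ * x))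
      + c2 * (x * Real.exp (-(μ⁻¹ * x))) + c3 * (x ^ 2 * Real.exp (-(μ⁻¹ * x)))
      + c4 * Real.exp (-(2 * μ⁻¹ * x)) + c5 * (x * Real.exp (-(2 * μ⁻¹ * x))))
      (volume.restrict (Ioi 0)) := h14.add h5
  rw [integral_add h15 h6,
    integral_add h14 h5,
    integral_add h13 h4,
    integral_add h12 h3,
    integral_add h1 h2,
    integral_const_mul, integral_const_mul, integral_const_mul, integral_const_mul,
    integral_const_mul, integral_const_mul, v1, v2, v3, v4, v5, v6]
  norm_num
  field_simp
  ring

lemma ioc_part (μ : ℝ) (hμ : 0 < μ) (x : ℝ) (hx : 0 < x) :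
    ∫ y in Ioc (0:ℝ) x, (3 * y - x) / 2 * Real.exp (-(μ⁻¹ * y))
      = (-(x * μ) - 3 * μ ^ 2 / 2) * Real.exp (-(μ⁻¹ * x)) - (x * μ / 2 - 3 * μ ^ 2 / 2) := by
  have hd : ∀ y ∈ uIcc (0:ℝ) x, HasDerivAt
      (fun y : ℝ => (0 * y ^ 2 + (-(3 * μ / 2)) * y + (x * μ / 2 - 3 * μ ^ 2 / 2))
        * Real.exp (-(μ⁻¹ * y)))
      ((3 * y - x) / 2 * Real.exp (-(μ⁻¹ * y))) y := by
    intro y _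
    have := hasDerivAt_poly_exp μ⁻¹ (x * μ / 2 - 3 * μ ^ 2 / 2) (-(3 * μ / 2)) 0 y
    refine this.congr_deriv ?_
    field_simp
    ring
  have hcont : Continuous (fun y : ℝ => (3 * y - x) / 2 * Real.exp (-(μ⁻¹ * y))) := by
    continuity
  have := intervalIntegral.integral_eq_sub_of_hasDerivAt hd (hcont.intervalIntegrable 0 x)
  rw [intervalIntegral.integral_of_le hx.le] at this
  rw [this]
  simp only [mul_zero, neg_zero, Real.exp_zero]
  ring

lemma inner_int (μ : ℝ) (hμ : 0 < μ) (x : ℝ) (hx : 0 < x) (r : ℝ → ℝ)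
    (hlt : ∀ y, 0 < y → y < x → r y = (3 * y - x) / 2)
    (hgt : ∀ y, x < y → r y = (3 * x - y) / 2) :
    ∫ y in Ioi (0:ℝ), r y * Real.exp (-(μ⁻¹ * y))
      = μ * (3 * μ / 2 - x / 2 - 2 * μ * Real.exp (-(μ⁻¹ * x))) := by
  have ha1 : (0:ℝ) < μ⁻¹ := inv_pos.2 hμ
  obtain ⟨i0x, v0x⟩ := exp_int0 μ⁻¹ x ha1
  obtain ⟨i1x, v1x⟩ := exp_int1 μ⁻¹ x ha1 hx.le
  -- equality a.e. on Ioc 0 x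
  have hne : ∀ᵐ y : ℝ, y ≠ x := by
    have : (volume : Measure ℝ) {x} = 0 := Real.volume_singleton
    exact ae_iff.2 (by simpa using this)
  have haeIoc : (fun y => r y * Real.exp (-(μ⁻¹ * y)))
      =ᵐ[volume.restrict (Ioc 0 x)] (fun y => (3 * y - x) / 2 * Real.exp (-(μ⁻¹ * y))) := by
    filter_upwards [ae_restrict_mem measurableSet_Ioc, ae_restrict_of_ae hne] with y hy hyx
    rw [hlt y hy.1 (lt_of_le_of_ne hy.2 hyx)]
  have haeIoi : (fun y => r y * Real.exp (-(μ⁻¹ * y)))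
      =ᵐ[volume.restrict (Ioi x)] (fun y => (3 * x / 2) * Real.exp (-(μ⁻¹ * y))
        + (-(1/2)) * (y * Real.exp (-(μ⁻¹ * y)))) := by
    filter_upwards [ae_restrict_mem measurableSet_Ioi] with y hy
    rw [hgt y hy]
    ring
  have hintIoc : IntegrableOn (fun y => r y * Real.exp (-(μ⁻¹ * y))) (Ioc 0 x) := by
    have : IntegrableOn (fun y : ℝ => (3 * y - x) / 2 * Real.exp (-(μ⁻¹ * y))) (Ioc 0 x) := by
      apply Continuous.integrableOn_Ioc
      continuity
    exact this.congr haeIoc.symm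
  have hsum : Integrable (fun y : ℝ => (3 * x / 2) * Real.exp (-(μ⁻¹ * y))
      + (-(1/2)) * (y * Real.exp (-(μ⁻¹ * y)))) (volume.restrict (Ioi x)) :=
    (i0x.const_mul _).add (i1x.const_mul _)
  have hintIoi : IntegrableOn (fun y => r y * Real.exp (-(μ⁻¹ * y))) (Ioi x) :=
    hsum.congr haeIoi.symm
  have hsplit : Ioc (0:ℝ) x ∪ Ioi x = Ioi 0 := Ioc_union_Ioi_eq_Ioi hx.le
  rw [← hsplit, setIntegral_union (Ioc_disjoint_Ioi le_rfl) measurableSet_Ioi hintIoc hintIoi]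
  rw [integral_congr_ae haeIoc, integral_congr_ae haeIoi, ioc_part μ hμ x hx,
    integral_add (i0x.const_mul _) (i1x.const_mul _), integral_const_mul, integral_const_mul,
    v0x, v1x]
  have hE : Real.exp (-(μ⁻¹ * x)) = Real.exp (-(μ⁻¹ * x)) := rfl
  field_simp
  ring

lemma tail_int (μ : ℝ) (hμ : 0 < μ) (x : ℝ) (hx : 0 ≤ x) :
    ∫ y in Ioi x, (y / μ) * Real.exp (-y / μ) = (x + μ) * Real.exp (-(μ⁻¹ * x)) := by
  have ha1 : (0:ℝ) < μ⁻¹ := inv_pos.2 hμ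
  obtain ⟨i1, v1⟩ := exp_int1 μ⁻¹ x ha1 hx
  have : ∫ y in Ioi x, (y / μ) * Real.exp (-y / μ)
      = ∫ y in Ioi x, μ⁻¹ * (y * Real.exp (-(μ⁻¹ * y))) := by
    refine setIntegral_congr_fun measurableSet_Ioi fun y _ => ?_
    rw [show -y/μ = -(μ⁻¹*y) from by ring]
    ring
  rw [this, integral_const_mul, v1]
  field_simp


/-- For the Ahmad kernel and i.i.d. exponentials with mean `μ`: the kernel has mean zero, the
projection variance equals `μ²/12`, and the i.i.d. asymptotic variance equals `μ²/3`. -/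
theorem ahmad_kernel_exponential_moments (μ : ℝ) (hμ : 0 < μ)
    (φ : ℝ → ℝ → ℝ) (hφ : ∀ x₁ x₂, φ x₁ x₂ = if x₂ > x₁ then 3 * x₁ - x₂ else 0)
    (ρ : ℝ → ℝ → ℝ) (hρ : ∀ x₁ x₂, ρ x₁ x₂ = (φ x₁ x₂ + φ x₂ x₁) / 2)
    (ρ₁ : ℝ → ℝ)
    (hρ₁ : ∀ x : ℝ, ρ₁ x = 2 * x * Real.exp (-x / μ) - x / 2 + 3 * μ / 2
        - 2 * ∫ y in Set.Ioi x, (y / μ) * Real.exp (-y / μ)) :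
    (∫ x in Set.Ioi (0 : ℝ), ∫ y in Set.Ioi (0 : ℝ),
        ρ x y * (μ⁻¹ * Real.exp (-x / μ)) * (μ⁻¹ * Real.exp (-y / μ))) = 0 ∧
    (∫ x in Set.Ioi (0 : ℝ), (ρ₁ x) ^ 2 * (μ⁻¹ * Real.exp (-x / μ)))
        - (∫ x in Set.Ioi (0 : ℝ), ρ₁ x * (μ⁻¹ * Real.exp (-x / μ))) ^ 2 = μ ^ 2 / 12 ∧
    4 * (μ ^ 2 / 12) = μ ^ 2 / 3 := by
  have hE : ∀ x : ℝ, Real.exp (-x / μ) = Real.exp (-(μ⁻¹ * x)) := by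
    intro x; rw [neg_div, div_eq_mul_inv, mul_comm]
  have hE2 : ∀ x : ℝ, Real.exp (-(2 * μ⁻¹ * x))
      = Real.exp (-(μ⁻¹ * x)) * Real.exp (-(μ⁻¹ * x)) := by
    intro x; rw [← Real.exp_add]; ring_nf
  have hE3 : ∀ x : ℝ, Real.exp (-(3 * μ⁻¹ * x))
      = Real.exp (-(μ⁻¹ * x)) * (Real.exp (-(μ⁻¹ * x)) * Real.exp (-(μ⁻¹ * x))) := by
    intro x; rw [← Real.exp_add, ← Real.exp_add]; ring_nf
  -- closed form of ρ₁ on Ioi 0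
  have hrho : ∀ x : ℝ, 0 < x → ρ₁ x = 3 * μ / 2 - x / 2 - 2 * μ * Real.exp (-(μ⁻¹ * x)) := by
    intro x hx
    rw [hρ₁ x, tail_int μ hμ x hx.le, hE x]
    ring
  refine ⟨?_, ?_, by ring⟩
  · -- part 1
    have houter : ∀ x ∈ Ioi (0:ℝ),
        (∫ y in Set.Ioi (0 : ℝ), ρ x y * (μ⁻¹ * Real.exp (-x / μ)) * (μ⁻¹ * Real.exp (-y / μ)))
        = (3/2 : ℝ) * Real.exp (-(μ⁻¹ * x)) + (-(μ⁻¹ / 2)) * (x * Real.exp (-(μ⁻¹ * x)))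
          + 0 * (x ^ 2 * Real.exp (-(μ⁻¹ * x))) + (-2 : ℝ) * Real.exp (-(2 * μ⁻¹ * x))
          + 0 * (x * Real.exp (-(2 * μ⁻¹ * x))) + 0 * Real.exp (-(3 * μ⁻¹ * x)) := by
      intro x hx
      have hstep : (∫ y in Set.Ioi (0 : ℝ),
          ρ x y * (μ⁻¹ * Real.exp (-x / μ)) * (μ⁻¹ * Real.exp (-y / μ)))
          = ∫ y in Set.Ioi (0 : ℝ),
            (μ⁻¹ * Real.exp (-(μ⁻¹ * x)) * μ⁻¹) * (ρ x y * Real.exp (-(μ⁻¹ * y))) := by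
        refine setIntegral_congr_fun measurableSet_Ioi fun y _ => ?_
        rw [hE x, hE y]; ring
      rw [hstep, integral_const_mul, inner_int μ hμ x hx (ρ x) ?_ ?_]
      · rw [hE2 x]; field_simp; ring
      · intro y hy hyx
        rw [hρ, hφ, hφ, if_neg (by simp only [gt_iff_lt]; linarith),
          if_pos (by simpa using hyx)]
        ring
      · intro y hxy
        rw [hρ, hφ, hφ, if_pos (by simpa using hxy), if_neg (by simp only [gt_iff_lt]; linarith)]
        ring
    rw [setIntegral_congr_fun measurableSet_Ioi houter, comb6 μ _ _ _ _ _ _ hμ]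
    field_simp
    ring
  · -- part 2
    have hm1 : (∫ x in Set.Ioi (0 : ℝ), ρ₁ x * (μ⁻¹ * Real.exp (-x / μ))) = 0 := by
      have h : ∀ x ∈ Ioi (0:ℝ), ρ₁ x * (μ⁻¹ * Real.exp (-x / μ))
          = (3/2 : ℝ) * Real.exp (-(μ⁻¹ * x)) + (-(μ⁻¹ / 2)) * (x * Real.exp (-(μ⁻¹ * x)))
            + 0 * (x ^ 2 * Real.exp (-(μ⁻¹ * x))) + (-2 : ℝ) * Real.exp (-(2 * μ⁻¹ * x))
            + 0 * (x * Real.exp (-(2 * μ⁻¹ * x))) + 0 * Real.exp (-(3 * μ⁻¹ * x)) := by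
        intro x hx
        rw [hrho x hx, hE x, hE2 x]
        field_simp
        ring
      rw [setIntegral_congr_fun measurableSet_Ioi h, comb6 μ _ _ _ _ _ _ hμ]
      field_simp
      ring
    have hm2 : (∫ x in Set.Ioi (0 : ℝ), (ρ₁ x) ^ 2 * (μ⁻¹ * Real.exp (-x / μ))) = μ ^ 2 / 12 := by
      have h : ∀ x ∈ Ioi (0:ℝ), (ρ₁ x) ^ 2 * (μ⁻¹ * Real.exp (-x / μ))
          = (9 * μ / 4) * Real.exp (-(μ⁻¹ * x)) + (-(3/2) : ℝ) * (x * Real.exp (-(μ⁻¹ * x)))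
            + (μ⁻¹ / 4) * (x ^ 2 * Real.exp (-(μ⁻¹ * x)))
            + (-(6 * μ)) * Real.exp (-(2 * μ⁻¹ * x))
            + (2 : ℝ) * (x * Real.exp (-(2 * μ⁻¹ * x)))
            + (4 * μ) * Real.exp (-(3 * μ⁻¹ * x)) := by
        intro x hx
        rw [hrho x hx, hE x, hE2 x, hE3 x]
        field_simp
        ring
      rw [setIntegral_congr_fun measurableSet_Ioi h, comb6 μ _ _ _ _ _ _ hμ]
      field_simp
      ring
    rw [hm1, hm2]
    ring
end

section
/- If X and Y are associated random variables and f, g : ℝ → ℝ satisfy f ≪ f̃ and g ≪ g̃ with f̃, g̃ non-decreasing, then |Cov(f(X), g(Y))| ≤ Cov(f̃(X), g̃(Y)) + Cov(f̃(X), g̃(Y)); in particular if f and g are Lipschitz with constant L then |Cov(f(X), g(Y))| ≤ L² Cov(X, Y). -/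
open MeasureTheory

/-- Covariance of two real random variables. -/
noncomputable def covRV {Ω : Type*} [MeasurableSpace Ω] (P : Measure Ω) (A B : Ω → ℝ) : ℝ :=
  (∫ ω, A ω * B ω ∂P) - (∫ ω, A ω ∂P) * (∫ ω, B ω ∂P)

lemma covRV_intmul {Ω : Type*} [MeasurableSpace Ω] (P : Measure Ω) [IsProbabilityMeasure P]
    {A B : Ω → ℝ} (hA : MemLp A 2 P) (hB : MemLp B 2 P) :
    Integrable (fun ω => A ω * B ω) P := by
  have h1 := (hA.add hB).integrable_sq
  have h2 := hA.integrable_sq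
  have h3 := hB.integrable_sq
  have heq : (fun ω => A ω * B ω) = fun ω => ((A ω + B ω) ^ 2 - A ω ^ 2 - B ω ^ 2) / 2 :=
    funext fun ω => by ring
  rw [heq]
  exact (((h1.sub h2).sub h3).div_const 2)

lemma covRV_expand {Ω : Type*} [MeasurableSpace Ω] (P : Measure Ω) [IsProbabilityMeasure P]
    {A B C D : Ω → ℝ} (hA : MemLp A 2 P) (hB : MemLp B 2 P) (hC : MemLp C 2 P)
    (hD : MemLp D 2 P) :
    covRV P (fun ω => A ω + B ω) (fun ω => C ω + D ω)
      = covRV P A C + covRV P A D + covRV P B C + covRV P B D := by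
  have iAC := covRV_intmul P hA hC
  have iAD := covRV_intmul P hA hD
  have iBC := covRV_intmul P hB hC
  have iBD := covRV_intmul P hB hD
  have iA := hA.integrable one_le_two
  have iB := hB.integrable one_le_two
  have iC := hC.integrable one_le_two
  have iD := hD.integrable one_le_two
  have e1 : ∫ ω, (A ω + B ω) * (C ω + D ω) ∂P
      = (∫ ω, A ω * C ω ∂P) + (∫ ω, A ω * D ω ∂P) + (∫ ω, B ω * C ω ∂P)
        + (∫ ω, B ω * D ω ∂P) := by
    have h : (fun ω => (A ω + B ω) * (C ω + D ω))
        = fun ω => A ω * C ω + (A ω * D ω + (B ω * C ω + B ω * D ω)) :=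
      funext fun ω => by ring
    have i1 : Integrable (fun ω => B ω * C ω + B ω * D ω) P := iBC.add iBD
    have i2 : Integrable (fun ω => A ω * D ω + (B ω * C ω + B ω * D ω)) P := iAD.add i1
    rw [h, integral_add iAC i2, integral_add iAD i1, integral_add iBC iBD]
    ring
  have e2 : ∫ ω, A ω + B ω ∂P = (∫ ω, A ω ∂P) + ∫ ω, B ω ∂P := integral_add iA iB
  have e3 : ∫ ω, C ω + D ω ∂P = (∫ ω, C ω ∂P) + ∫ ω, D ω ∂P := integral_add iC iD
  simp only [covRV, e1, e2, e3]
  ring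

lemma covRV_neg_right {Ω : Type*} [MeasurableSpace Ω] (P : Measure Ω) (A D : Ω → ℝ) :
    covRV P A (fun ω => -D ω) = - covRV P A D := by
  have e : ∫ ω, A ω * -D ω ∂P = - ∫ ω, A ω * D ω ∂P := by
    rw [← integral_neg]
    exact integral_congr_ae (Filter.Eventually.of_forall fun ω => by ring)
  simp only [covRV, e, integral_neg]
  ring

lemma covRV_neg_left {Ω : Type*} [MeasurableSpace Ω] (P : Measure Ω) (B C : Ω → ℝ) :
    covRV P (fun ω => -B ω) C = - covRV P B C := by
  have e : ∫ ω, -B ω * C ω ∂P = - ∫ ω, B ω * C ω ∂P := by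
    rw [← integral_neg]
    exact integral_congr_ae (Filter.Eventually.of_forall fun ω => by ring)
  simp only [covRV, e, integral_neg]
  ring

lemma covRV_key {Ω : Type*} [MeasurableSpace Ω] (P : Measure Ω) [IsProbabilityMeasure P]
    (X Y : Ω → ℝ)
    (hassoc : ∀ h k : ℝ × ℝ → ℝ, Monotone h → Monotone k → Measurable h → Measurable k →
      MemLp (fun ω => h (X ω, Y ω)) 2 P → MemLp (fun ω => k (X ω, Y ω)) 2 P →
      0 ≤ covRV P (fun ω => h (X ω, Y ω)) (fun ω => k (X ω, Y ω)))
    (f g ftil gtil : ℝ → ℝ)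
    (hfm : Measurable f) (hgm : Measurable g) (hftm : Measurable ftil) (hgtm : Measurable gtil)
    (hfadd : Monotone (ftil + f)) (hfsub : Monotone (ftil - f))
    (hgadd : Monotone (gtil + g)) (hgsub : Monotone (gtil - g))
    (hf2 : MemLp (fun ω => f (X ω)) 2 P) (hg2 : MemLp (fun ω => g (Y ω)) 2 P)
    (hft2 : MemLp (fun ω => ftil (X ω)) 2 P) (hgt2 : MemLp (fun ω => gtil (Y ω)) 2 P) :
    |covRV P (fun ω => f (X ω)) (fun ω => g (Y ω))|
      ≤ covRV P (fun ω => ftil (X ω)) (fun ω => gtil (Y ω)) := by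
  have hpadd : Monotone (fun p : ℝ × ℝ => ftil p.1 + f p.1) := fun p q hpq => hfadd hpq.1
  have hpsub : Monotone (fun p : ℝ × ℝ => ftil p.1 - f p.1) := fun p q hpq => hfsub hpq.1
  have hqadd : Monotone (fun p : ℝ × ℝ => gtil p.2 + g p.2) := fun p q hpq => hgadd hpq.2
  have hqsub : Monotone (fun p : ℝ × ℝ => gtil p.2 - g p.2) := fun p q hpq => hgsub hpq.2
  have mpadd : Measurable (fun p : ℝ × ℝ => ftil p.1 + f p.1) :=
    (hftm.comp measurable_fst).add (hfm.comp measurable_fst)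
  have mpsub : Measurable (fun p : ℝ × ℝ => ftil p.1 - f p.1) :=
    (hftm.comp measurable_fst).sub (hfm.comp measurable_fst)
  have mqadd : Measurable (fun p : ℝ × ℝ => gtil p.2 + g p.2) :=
    (hgtm.comp measurable_snd).add (hgm.comp measurable_snd)
  have mqsub : Measurable (fun p : ℝ × ℝ => gtil p.2 - g p.2) :=
    (hgtm.comp measurable_snd).sub (hgm.comp measurable_snd)
  have Lpadd : MemLp (fun ω => ftil (X ω) + f (X ω)) 2 P := hft2.add hf2
  have Lpsub : MemLp (fun ω => ftil (X ω) - f (X ω)) 2 P := hft2.sub hf2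
  have Lqadd : MemLp (fun ω => gtil (Y ω) + g (Y ω)) 2 P := hgt2.add hg2
  have Lqsub : MemLp (fun ω => gtil (Y ω) - g (Y ω)) 2 P := hgt2.sub hg2
  have P1 := hassoc _ _ hpadd hqadd mpadd mqadd Lpadd Lqadd
  have P2 := hassoc _ _ hpsub hqsub mpsub mqsub Lpsub Lqsub
  have P3 := hassoc _ _ hpadd hqsub mpadd mqsub Lpadd Lqsub
  have P4 := hassoc _ _ hpsub hqadd mpsub mqadd Lpsub Lqadd
  simp only [] at P1 P2 P3 P4
  have hsf : (fun ω : Ω => ftil (X ω) - f (X ω)) = fun ω => ftil (X ω) + -f (X ω) :=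
    funext fun ω => sub_eq_add_neg _ _
  have hsg : (fun ω : Ω => gtil (Y ω) - g (Y ω)) = fun ω => gtil (Y ω) + -g (Y ω) :=
    funext fun ω => sub_eq_add_neg _ _
  rw [hsf] at P2 P4
  rw [hsg] at P2 P3
  have Eaa : covRV P (fun ω => ftil (X ω) + f (X ω)) (fun ω => gtil (Y ω) + g (Y ω))
      = covRV P (fun ω => ftil (X ω)) (fun ω => gtil (Y ω))
        + covRV P (fun ω => ftil (X ω)) (fun ω => g (Y ω))
        + covRV P (fun ω => f (X ω)) (fun ω => gtil (Y ω))
        + covRV P (fun ω => f (X ω)) (fun ω => g (Y ω)) :=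
    covRV_expand P hft2 hf2 hgt2 hg2
  have Ess : covRV P (fun ω => ftil (X ω) + -f (X ω)) (fun ω => gtil (Y ω) + -g (Y ω))
      = covRV P (fun ω => ftil (X ω)) (fun ω => gtil (Y ω))
        + covRV P (fun ω => ftil (X ω)) (fun ω => -g (Y ω))
        + covRV P (fun ω => -f (X ω)) (fun ω => gtil (Y ω))
        + covRV P (fun ω => -f (X ω)) (fun ω => -g (Y ω)) :=
    covRV_expand P hft2 hf2.neg hgt2 hg2.neg
  have Eas : covRV P (fun ω => ftil (X ω) + f (X ω)) (fun ω => gtil (Y ω) + -g (Y ω))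
      = covRV P (fun ω => ftil (X ω)) (fun ω => gtil (Y ω))
        + covRV P (fun ω => ftil (X ω)) (fun ω => -g (Y ω))
        + covRV P (fun ω => f (X ω)) (fun ω => gtil (Y ω))
        + covRV P (fun ω => f (X ω)) (fun ω => -g (Y ω)) :=
    covRV_expand P hft2 hf2 hgt2 hg2.neg
  have Esa : covRV P (fun ω => ftil (X ω) + -f (X ω)) (fun ω => gtil (Y ω) + g (Y ω))
      = covRV P (fun ω => ftil (X ω)) (fun ω => gtil (Y ω))
        + covRV P (fun ω => ftil (X ω)) (fun ω => g (Y ω))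
        + covRV P (fun ω => -f (X ω)) (fun ω => gtil (Y ω))
        + covRV P (fun ω => -f (X ω)) (fun ω => g (Y ω)) :=
    covRV_expand P hft2 hf2.neg hgt2 hg2
  simp only [covRV_neg_left, covRV_neg_right, neg_neg] at Ess Eas Esa
  rw [Eaa] at P1
  rw [Ess] at P2
  rw [Eas] at P3
  rw [Esa] at P4
  rw [abs_le]
  constructor <;> linarith

/-- Covariance bound for functions of an associated pair dominated in the `≪` order, with the
Lipschitz consequence. -/
theorem covariance_bound_for_dominated_functions
    {Ω : Type*} [MeasurableSpace Ω] (P : Measure Ω) [IsProbabilityMeasure P]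
    (X Y : Ω → ℝ) (hX : Measurable X) (hY : Measurable Y)
    (hassoc : ∀ h k : ℝ × ℝ → ℝ, Monotone h → Monotone k → Measurable h → Measurable k →
      MemLp (fun ω => h (X ω, Y ω)) 2 P → MemLp (fun ω => k (X ω, Y ω)) 2 P →
      0 ≤ covRV P (fun ω => h (X ω, Y ω)) (fun ω => k (X ω, Y ω)))
    (f g ftil gtil : ℝ → ℝ)
    (hfm : Measurable f) (hgm : Measurable g) (hftm : Measurable ftil) (hgtm : Measurable gtil)
    (hftil : Monotone ftil) (hgtil : Monotone gtil)
    (hfadd : Monotone (ftil + f)) (hfsub : Monotone (ftil - f))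
    (hgadd : Monotone (gtil + g)) (hgsub : Monotone (gtil - g))
    (hf2 : MemLp (fun ω => f (X ω)) 2 P) (hg2 : MemLp (fun ω => g (Y ω)) 2 P)
    (hft2 : MemLp (fun ω => ftil (X ω)) 2 P) (hgt2 : MemLp (fun ω => gtil (Y ω)) 2 P) :
    |covRV P (fun ω => f (X ω)) (fun ω => g (Y ω))|
        ≤ covRV P (fun ω => ftil (X ω)) (fun ω => gtil (Y ω))
          + covRV P (fun ω => ftil (X ω)) (fun ω => gtil (Y ω)) ∧
    ∀ L : NNReal, LipschitzWith L f → LipschitzWith L g →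
      MemLp X 2 P → MemLp Y 2 P →
      |covRV P (fun ω => f (X ω)) (fun ω => g (Y ω))| ≤ (L : ℝ) ^ 2 * covRV P X Y := by
  have hkey := covRV_key P X Y hassoc f g ftil gtil hfm hgm hftm hgtm hfadd hfsub hgadd hgsub
    hf2 hg2 hft2 hgt2
  have hpos : 0 ≤ covRV P (fun ω => ftil (X ω)) (fun ω => gtil (Y ω)) := by
    have := hassoc (fun p => ftil p.1) (fun p => gtil p.2)
      (fun p q hpq => hftil hpq.1) (fun p q hpq => hgtil hpq.2)
      (hftm.comp measurable_fst) (hgtm.comp measurable_snd) hft2 hgt2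
    simpa using this
  refine ⟨by linarith, ?_⟩
  intro L hLf hLg hX2 hY2
  have hmono : Monotone (fun x : ℝ => (L : ℝ) * x) :=
    fun a b hab => mul_le_mul_of_nonneg_left hab L.2
  have hstep : ∀ (u : ℝ → ℝ), LipschitzWith L u →
      Monotone ((fun x : ℝ => (L : ℝ) * x) + u) ∧
      Monotone ((fun x : ℝ => (L : ℝ) * x) - u) := by
    intro u hu
    constructor <;> intro a b hab <;>
    · have h1 := hu.dist_le_mul a b
      rw [Real.dist_eq, Real.dist_eq] at h1
      have habs : |a - b| = b - a := by rw [abs_of_nonpos (by linarith)]; ring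
      rw [habs] at h1
      have h2 := abs_le.1 h1
      simp only [Pi.add_apply, Pi.sub_apply]
      nlinarith [h2.1, h2.2]
  have hkey2 := covRV_key P X Y hassoc f g (fun x => (L : ℝ) * x) (fun x => (L : ℝ) * x)
    hfm hgm (measurable_id.const_mul _) (measurable_id.const_mul _)
    (hstep f hLf).1 (hstep f hLf).2 (hstep g hLg).1 (hstep g hLg).2
    hf2 hg2 (hX2.const_mul _) (hY2.const_mul _)
  have hcov : covRV P (fun ω => (L : ℝ) * X ω) (fun ω => (L : ℝ) * Y ω)
      = (L : ℝ) ^ 2 * covRV P X Y := by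
    have e : ∫ ω, ((L : ℝ) * X ω) * ((L : ℝ) * Y ω) ∂P
        = (L : ℝ) ^ 2 * ∫ ω, X ω * Y ω ∂P := by
      rw [← integral_const_mul]
      exact integral_congr_ae (Filter.Eventually.of_forall fun ω => by ring)
    simp only [covRV, e, integral_const_mul]
    ring
  rw [hcov] at hkey2
  exact hkey2
end
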